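/- arXiv:1410.4072 — 8 statements merged into one kernel-verified Lean document; each statement's English description precedes it below -/
import Mathlib

section
/- The map β ↦ β·C(β) tends to +∞ as β → +∞. -/
open MeasureTheory Real Filter Set

/-- `C(β) = ∫₀¹ (1-x)⁻¹ exp(-∫₀ˣ b(aβy)/(1-y) dy) dx`. -/
noncomputable def Cfun (a : ℝ) (b : ℝ → ℝ) (β : ℝ) : ℝ :=
  ∫ x in (0:ℝ)..1, (1 - x)⁻¹ * Real.exp (-∫ y in (0:ℝ)..x, b (a * β * y) / (1 - y))

section Aux

variable {a β : ℝ} {b : ℝ → ℝ}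

private lemma g_contOn (hb : Continuous b) :
    ContinuousOn (fun y => b (a * β * y) / (1 - y)) (Iio 1) := by
  apply ContinuousOn.div
  · exact (hb.comp (continuous_const.mul continuous_id')).continuousOn
  · exact (continuous_const.sub continuous_id').continuousOn
  · intro y hy
    simp only [mem_Iio] at hy
    intro h; linarith

private lemma g_int (hb : Continuous b) {u v : ℝ} (huv : u ≤ v) (hv : v < 1) :
    IntervalIntegrable (fun y => b (a * β * y) / (1 - y)) volume u v := by
  apply ContinuousOn.intervalIntegrable
  apply (g_contOn hb).mono
  rw [uIcc_of_le huv]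
  exact fun z hz => lt_of_le_of_lt hz.2 hv

private lemma g_nonneg (ha : 0 ≤ a) (hβ : 0 ≤ β) (hb_mono : MonotoneOn b (Set.Ici 0))
    (hb0 : 0 ≤ b 0) {y : ℝ} (hy0 : 0 ≤ y) (hy1 : y ≤ 1) :
    0 ≤ b (a * β * y) / (1 - y) := by
  have h1 : 0 ≤ a * β * y := mul_nonneg (mul_nonneg ha hβ) hy0
  have h2 : b 0 ≤ b (a * β * y) := hb_mono (mem_Ici.2 le_rfl) (mem_Ici.2 h1) h1
  have h3 : 0 ≤ 1 - y := by linarith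
  exact div_nonneg (by linarith) h3

private lemma F_contOn (hb : Continuous b) :
    ContinuousOn (fun x => ∫ y in (0:ℝ)..x, b (a * β * y) / (1 - y)) (Ico 0 1) := by
  intro x hx
  obtain ⟨hx0, hx1⟩ := hx
  set c : ℝ := (x + 1) / 2 with hc
  have hxc : x < c := by rw [hc]; linarith
  have hc1 : c < 1 := by rw [hc]; linarith
  have hc0 : (0:ℝ) ≤ c := by rw [hc]; linarith
  have hint : IntegrableOn (fun y => b (a * β * y) / (1 - y)) (uIcc 0 c) volume := by
    have h := g_int (a := a) (β := β) hb hc0 hc1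
    rw [intervalIntegrable_iff_integrableOn_Icc_of_le hc0] at h
    rwa [uIcc_of_le hc0]
  have hcont := intervalIntegral.continuousOn_primitive_interval (a := 0) (b := c) hint
  rw [uIcc_of_le hc0] at hcont
  have h1 : ContinuousWithinAt (fun x => ∫ y in (0:ℝ)..x, b (a * β * y) / (1 - y))
      (Icc 0 c) x := hcont x ⟨hx0, hxc.le⟩
  apply h1.mono_of_mem_nhdsWithin
  refine Filter.mem_of_superset
    (Filter.inter_mem self_mem_nhdsWithin (nhdsWithin_le_nhds (Iio_mem_nhds hxc))) ?_
  rintro z ⟨hz1, hz2⟩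
  exact ⟨hz1.1, le_of_lt hz2⟩

private lemma f_contOn (hb : Continuous b) :
    ContinuousOn (fun x => (1 - x)⁻¹ *
      Real.exp (-∫ y in (0:ℝ)..x, b (a * β * y) / (1 - y))) (Ico 0 1) := by
  apply ContinuousOn.mul
  · apply ContinuousOn.inv₀ (continuous_const.sub continuous_id').continuousOn
    intro x hx
    have := hx.2
    intro h; simp only [Pi.sub_apply] at h; linarith
  · exact Real.continuous_exp.comp_continuousOn (F_contOn hb).neg

/-- The integrand of `Cfun` is interval integrable on `[0,1]`. -/
private lemma f_intervalIntegrable (ha : 0 < a) (hβ : 0 < β) (hb_cont : Continuous b)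
    (hb_mono : MonotoneOn b (Set.Ici 0)) (hb0 : 0 ≤ b 0)
    (hb_pos : ∀ x > (0:ℝ), 0 < b x) :
    IntervalIntegrable (fun x => (1 - x)⁻¹ *
      Real.exp (-∫ y in (0:ℝ)..x, b (a * β * y) / (1 - y))) volume 0 1 := by
  set g : ℝ → ℝ := fun y => b (a * β * y) / (1 - y) with hgdef
  set F : ℝ → ℝ := fun x => ∫ y in (0:ℝ)..x, g y with hFdef
  set f : ℝ → ℝ := fun x => (1 - x)⁻¹ * Real.exp (-(F x)) with hfdef
  set c : ℝ := b (a * β * (1/2)) with hcdef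
  have haβ : 0 < a * β := mul_pos ha hβ
  have hcpos : 0 < c := hb_pos _ (by nlinarith)
  -- lower bound for F on (1/2, 1)
  have hFlow : ∀ x ∈ Ioo (1/2 : ℝ) 1, c * Real.log ((1/2) / (1 - x)) ≤ F x := by
    intro x hx
    obtain ⟨hx2, hx1⟩ := hx
    have hsplit : (∫ y in (0:ℝ)..(1/2), g y) + (∫ y in (1/2:ℝ)..x, g y) = F x :=
      intervalIntegral.integral_add_adjacent_intervals
        (g_int hb_cont (by norm_num) (by norm_num)) (g_int hb_cont hx2.le hx1)
    have h1 : (0:ℝ) ≤ ∫ y in (0:ℝ)..(1/2), g y := by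
      apply intervalIntegral.integral_nonneg (by norm_num)
      intro y hy
      exact g_nonneg ha.le hβ.le hb_mono hb0 hy.1 (by linarith [hy.2])
    have h2 : (∫ y in (1/2:ℝ)..x, c * (1 - y)⁻¹) ≤ ∫ y in (1/2:ℝ)..x, g y := by
      apply intervalIntegral.integral_mono_on hx2.le
      · apply ContinuousOn.intervalIntegrable
        apply ContinuousOn.mul continuousOn_const
        apply ContinuousOn.inv₀ (continuous_const.sub continuous_id').continuousOn
        intro y hy
        rw [uIcc_of_le hx2.le] at hy
        have := hy.2
        intro h; simp only [Pi.sub_apply] at h; linarith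
      · exact g_int hb_cont hx2.le hx1
      · intro y hy
        obtain ⟨hy2, hyx⟩ := hy
        have hypos : 0 < 1 - y := by linarith
        have hbc : c ≤ b (a * β * y) := by
          apply hb_mono (mem_Ici.2 (by nlinarith)) (mem_Ici.2 (by nlinarith))
          nlinarith
        rw [hgdef]
        simp only []
        rw [div_eq_mul_inv]
        exact mul_le_mul_of_nonneg_right hbc (by positivity)
    have h3 : (∫ y in (1/2:ℝ)..x, c * (1 - y)⁻¹) = c * Real.log ((1/2) / (1 - x)) := by
      rw [intervalIntegral.integral_const_mul]
      congr 1
      have h4 := intervalIntegral.integral_comp_sub_left (a := (1/2:ℝ)) (b := x)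
        (fun u => u⁻¹) 1
      rw [h4, show (1:ℝ) - 1/2 = 1/2 by norm_num,
        integral_inv_of_pos (by linarith) (by norm_num)]
    nlinarith [h2, h3]
  -- upper bound for f on (1/2, 1)
  have hfub : ∀ x ∈ Ioo (1/2 : ℝ) 1,
      f x ≤ (1 - x) ^ (c - 1) * ((1/2 : ℝ) ^ (-c)) := by
    intro x hx
    obtain ⟨hx2, hx1⟩ := hx
    have h1x : 0 < 1 - x := by linarith
    have hq : (0:ℝ) < (1/2) / (1 - x) := by positivity
    have hexp : Real.exp (-(F x)) ≤ ((1/2) / (1 - x)) ^ (-c) := by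
      rw [Real.rpow_def_of_pos hq]
      apply Real.exp_le_exp.2
      have h := hFlow x ⟨hx2, hx1⟩
      rw [show Real.log ((1/2) / (1 - x)) * (-c) = -(c * Real.log ((1/2) / (1 - x)))
        from by ring]
      exact neg_le_neg h
    have hsplit : ((1/2 : ℝ) / (1 - x)) ^ (-c) = (1/2 : ℝ) ^ (-c) * (1 - x) ^ c := by
      rw [Real.div_rpow (by norm_num) h1x.le, Real.rpow_neg h1x.le,
        div_eq_mul_inv, inv_inv]
    have hstep : f x ≤ (1 - x)⁻¹ * ((1/2 : ℝ) ^ (-c) * (1 - x) ^ c) := by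
      rw [hfdef]
      simp only []
      rw [← hsplit]
      exact mul_le_mul_of_nonneg_left hexp (by positivity)
    calc f x ≤ (1 - x)⁻¹ * ((1/2 : ℝ) ^ (-c) * (1 - x) ^ c) := hstep
      _ = (1 - x) ^ (c - 1) * ((1/2 : ℝ) ^ (-c)) := by
          rw [Real.rpow_sub h1x, Real.rpow_one, div_eq_mul_inv]
          ring
  -- majorant is integrable
  have hmaj : IntervalIntegrable (fun x => (1 - x) ^ (c - 1) * ((1/2 : ℝ) ^ (-c)))
      volume (1/2) 1 := by
    have h3 := (intervalIntegral.intervalIntegrable_rpow' (a := (1/2:ℝ)) (b := 0)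
      (by linarith : (-1:ℝ) < c - 1)).comp_sub_left 1
    rw [show (1:ℝ) - 1/2 = 1/2 by norm_num, show (1:ℝ) - 0 = 1 by norm_num] at h3
    exact h3.mul_const _
  -- nonnegativity of f
  have hf0 : ∀ x : ℝ, 0 ≤ x → x ≤ 1 → 0 ≤ f x := by
    intro x hx0 hx1
    apply mul_nonneg _ (Real.exp_pos _).le
    have : 0 ≤ 1 - x := by linarith
    exact inv_nonneg.2 this
  -- integrable on (1/2, 1]
  have hi2 : IntegrableOn f (Ioc (1/2 : ℝ) 1) volume := by
    rw [integrableOn_Ioc_iff_integrableOn_Ioo]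
    have hmeas : AEStronglyMeasurable f (volume.restrict (Ioo (1/2:ℝ) 1)) := by
      apply ContinuousOn.aestronglyMeasurable _ measurableSet_Ioo
      exact (f_contOn hb_cont).mono (fun z hz => ⟨by linarith [hz.1], hz.2⟩)
    have hmaj' : IntegrableOn (fun x => (1 - x) ^ (c - 1) * ((1/2 : ℝ) ^ (-c)))
        (Ioo (1/2:ℝ) 1) volume := by
      rw [intervalIntegrable_iff_integrableOn_Ioc_of_le (by norm_num)] at hmaj
      exact hmaj.mono_set Ioo_subset_Ioc_self
    apply Integrable.mono hmaj' hmeas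
    filter_upwards [ae_restrict_mem measurableSet_Ioo] with x hx
    have hnn := hf0 x (by linarith [hx.1]) hx.2.le
    rw [Real.norm_eq_abs, Real.norm_eq_abs, abs_of_nonneg hnn]
    exact le_trans (hfub x hx) (le_abs_self _)
  -- integrable on (0, 1/2]
  have hi1 : IntegrableOn f (Ioc (0:ℝ) (1/2)) volume := by
    apply IntegrableOn.mono_set _ Ioc_subset_Icc_self
    apply ContinuousOn.integrableOn_Icc
    exact (f_contOn hb_cont).mono (fun z hz => ⟨hz.1, by linarith [hz.2]⟩)
  rw [intervalIntegrable_iff_integrableOn_Ioc_of_le (by norm_num)]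
  have hun : Ioc (0:ℝ) 1 = Ioc (0:ℝ) (1/2) ∪ Ioc (1/2:ℝ) 1 := by
    rw [Ioc_union_Ioc_eq_Ioc (by norm_num) (by norm_num)]
  rw [hun]
  exact hi1.union hi2

end Aux

/-- `β C(β) → ∞` as `β → ∞`. -/
theorem betaC_tendsto_atTop
    (a : ℝ) (ha : 0 < a) (b : ℝ → ℝ)
    (hb_cont : Continuous b) (hb_mono : MonotoneOn b (Set.Ici 0))
    (hb0 : 0 ≤ b 0) (hb_pos : ∀ x > (0:ℝ), 0 < b x) :
    Tendsto (fun β => β * Cfun a b β) atTop atTop := by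
  rw [tendsto_atTop]
  intro K
  set M : ℝ := 3 * |K| + 3 with hMdef
  have hM3 : (3:ℝ) ≤ M := by have := abs_nonneg K; linarith
  have hMpos : 0 < M := by linarith
  set c₂ : ℝ := b (a * M) with hc2
  have haM : 0 ≤ a * M := mul_nonneg ha.le hMpos.le
  have hc2nn : 0 ≤ c₂ := by
    have := hb_mono (mem_Ici.2 le_rfl) (mem_Ici.2 haM) haM
    linarith
  filter_upwards [eventually_ge_atTop (max (2 * M) (4 * c₂ * M + 1))] with β hβ
  have hβ2M : 2 * M ≤ β := le_trans (le_max_left _ _) hβ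
  have hβc : 4 * c₂ * M + 1 ≤ β := le_trans (le_max_right _ _) hβ
  have hβpos : 0 < β := by linarith
  have haβ : 0 < a * β := mul_pos ha hβpos
  set t : ℝ := M / β with htdef
  have htpos : 0 < t := by positivity
  have hthalf : t ≤ 1/2 := by
    rw [htdef, div_le_iff₀ hβpos]; linarith
  have ht1 : t < 1 := by linarith
  have hβt : β * t = M := by
    rw [htdef]; field_simp
  have haβt : a * β * t = a * M := by
    rw [mul_assoc, hβt]
  set g : ℝ → ℝ := fun y => b (a * β * y) / (1 - y) with hgdef
  set F : ℝ → ℝ := fun x => ∫ y in (0:ℝ)..x, g y with hFdef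
  set f : ℝ → ℝ := fun x => (1 - x)⁻¹ * Real.exp (-(F x)) with hfdef
  have hfint : IntervalIntegrable f volume 0 1 :=
    f_intervalIntegrable ha hβpos hb_cont hb_mono hb0 hb_pos
  have hf0t : IntervalIntegrable f volume 0 t := by
    apply hfint.mono_set
    rw [uIcc_of_le htpos.le, uIcc_of_le zero_le_one]
    exact Icc_subset_Icc le_rfl ht1.le
  have hft1 : IntervalIntegrable f volume t 1 := by
    apply hfint.mono_set
    rw [uIcc_of_le ht1.le, uIcc_of_le zero_le_one]
    exact Icc_subset_Icc htpos.le le_rfl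
  -- F x ≤ 2 * c₂ * t for x in [0, t]
  have hFub : ∀ x ∈ Icc (0:ℝ) t, F x ≤ 2 * c₂ * t := by
    intro x hx
    obtain ⟨hx0, hxt⟩ := hx
    have hle : F x ≤ (x - 0) • (2 * c₂) := by
      rw [← intervalIntegral.integral_const]
      apply intervalIntegral.integral_mono_on hx0
        (g_int hb_cont hx0 (by linarith)) intervalIntegrable_const
      intro y hy
      obtain ⟨hy0, hyx⟩ := hy
      have hyt : y ≤ t := le_trans hyx hxt
      have h1y : (1:ℝ)/2 ≤ 1 - y := by linarith
      have haβy : 0 ≤ a * β * y := mul_nonneg haβ.le hy0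
      have haβt' : 0 ≤ a * β * t := mul_nonneg haβ.le htpos.le
      have hby : b (a * β * y) ≤ c₂ := by
        rw [hc2, ← haβt]
        apply hb_mono (mem_Ici.2 haβy) (mem_Ici.2 haβt')
        nlinarith
      have hbynn : 0 ≤ b (a * β * y) := by
        have := hb_mono (mem_Ici.2 le_rfl) (mem_Ici.2 haβy) haβy
        linarith
      have hgoal : b (a * β * y) / (1 - y) ≤ 2 * c₂ := by
        rw [div_le_iff₀ (by linarith)]
        nlinarith
      exact hgoal
    rw [smul_eq_mul, sub_zero] at hle
    nlinarith [mul_le_mul_of_nonneg_right hxt (by linarith : (0:ℝ) ≤ 2 * c₂)]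
  -- f x ≥ exp (-(2 c₂ t)) on [0, t]
  have hflb : ∀ x ∈ Icc (0:ℝ) t, Real.exp (-(2 * c₂ * t)) ≤ f x := by
    intro x hx
    obtain ⟨hx0, hxt⟩ := hx
    have h1x : 0 < 1 - x := by have := le_trans hxt hthalf; linarith
    have h1xle : 1 - x ≤ 1 := by linarith
    have hinv : 1 ≤ (1 - x)⁻¹ := (one_le_inv₀ h1x).2 h1xle
    have hexp : Real.exp (-(2 * c₂ * t)) ≤ Real.exp (-(F x)) := by
      apply Real.exp_le_exp.2
      have := hFub x ⟨hx0, hxt⟩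
      linarith
    calc Real.exp (-(2 * c₂ * t)) ≤ Real.exp (-(F x)) := hexp
      _ = 1 * Real.exp (-(F x)) := (one_mul _).symm
      _ ≤ (1 - x)⁻¹ * Real.exp (-(F x)) :=
          mul_le_mul_of_nonneg_right hinv (Real.exp_pos _).le
  -- lower bound on ∫₀ᵗ f
  have hlow : t * Real.exp (-(2 * c₂ * t)) ≤ ∫ x in (0:ℝ)..t, f x := by
    have h := intervalIntegral.integral_mono_on htpos.le intervalIntegrable_const
      hf0t hflb
    rwa [intervalIntegral.integral_const, smul_eq_mul, sub_zero] at h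
  -- tail is nonnegative
  have htail : 0 ≤ ∫ x in t..1, f x := by
    apply intervalIntegral.integral_nonneg ht1.le
    intro x hx
    apply mul_nonneg _ (Real.exp_pos _).le
    have : 0 ≤ 1 - x := by linarith [hx.2]
    exact inv_nonneg.2 this
  have hsplit : (∫ x in (0:ℝ)..t, f x) + (∫ x in t..1, f x) = ∫ x in (0:ℝ)..1, f x :=
    intervalIntegral.integral_add_adjacent_intervals hf0t hft1
  have hC : Cfun a b β = ∫ x in (0:ℝ)..1, f x := rfl
  have hClow : t * Real.exp (-(2 * c₂ * t)) ≤ Cfun a b β := by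
    rw [hC, ← hsplit]; linarith
  -- conclude
  have hexp1 : Real.exp (-(1:ℝ)) ≤ Real.exp (-(2 * c₂ * t)) := by
    apply Real.exp_le_exp.2
    have h2ct : 2 * c₂ * t ≤ 1 := by
      rw [htdef, ← mul_div_assoc, div_le_one hβpos]
      nlinarith [mul_nonneg hc2nn hMpos.le]
    linarith
  have hexp3 : (1:ℝ)/3 ≤ Real.exp (-(1:ℝ)) := by
    have h1 : Real.exp 1 ≤ 3 := by
      have := Real.exp_one_lt_d9
      linarith
    rw [Real.exp_neg, show (1:ℝ)/3 = 3⁻¹ by norm_num]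
    exact inv_anti₀ (Real.exp_pos 1) h1
  have hfinal : M * ((1:ℝ)/3) ≤ β * Cfun a b β := by
    calc M * ((1:ℝ)/3) ≤ M * Real.exp (-(2 * c₂ * t)) := by
          apply mul_le_mul_of_nonneg_left _ hMpos.le
          linarith
      _ = β * (t * Real.exp (-(2 * c₂ * t))) := by
          rw [← mul_assoc, hβt]
      _ ≤ β * Cfun a b β := mul_le_mul_of_nonneg_left hClow hβpos.le
  have hKM : K ≤ M * ((1:ℝ)/3) := by
    rw [hMdef]
    have := le_abs_self K
    linarith
  linarith
end

section
/- For every δ ∈ (0, 1) and every β > 0 one has the lower bound β·C(β) ≥ −β·log(1 − δ)·exp(−(δ/(1 − δ))·b(aβδ)). -/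
open MeasureTheory Real Filter Set

/-- for every `δ ∈ (0,1)` and `β > 0`,
`β C(β) ≥ -β log(1-δ) exp(-(δ/(1-δ)) b(aβδ))`. -/
theorem betaC_lower_bound
    (a : ℝ) (ha : 0 < a) (b : ℝ → ℝ)
    (hb_cont : Continuous b) (hb_mono : MonotoneOn b (Set.Ici 0))
    (hb0 : 0 ≤ b 0) (hb_pos : ∀ x > (0:ℝ), 0 < b x)
    (δ β : ℝ) (hδ : δ ∈ Set.Ioo (0:ℝ) 1) (hβ : 0 < β) :
    -β * Real.log (1 - δ) * Real.exp (-(δ / (1 - δ)) * b (a * β * δ))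
      ≤ β * Cfun a b β := by
  obtain ⟨hδ0, hδ1⟩ := hδ
  have habβ : 0 < a * β := mul_pos ha hβ
  set h : ℝ → ℝ := fun y => b (a * β * y) / (1 - y) with hh_def
  set g : ℝ → ℝ := fun x => ∫ y in (0:ℝ)..x, h y with hg_def
  set f : ℝ → ℝ := fun x => (1 - x)⁻¹ * Real.exp (-g x) with hf_def
  have hC : Cfun a b β = ∫ x in (0:ℝ)..1, f x := rfl
  -- b is nonnegative on [0,∞)
  have hbnn : ∀ t : ℝ, 0 ≤ t → 0 ≤ b t := fun t ht =>
    hb0.trans (hb_mono Set.self_mem_Ici ht ht)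
  -- continuity of h below 1
  have hcontAt : ∀ x : ℝ, x < 1 → ContinuousAt h x := by
    intro x hx
    have hne : (1 : ℝ) - x ≠ 0 := by linarith
    exact ((hb_cont.comp (continuous_const.mul continuous_id)).continuousAt).div
      ((continuous_const.sub continuous_id).continuousAt) hne
  have hcontOn : ContinuousOn h (Set.Iio 1) := fun x hx =>
    (hcontAt x hx).continuousWithinAt
  have hInt : ∀ u v : ℝ, u < 1 → v < 1 → IntervalIntegrable h volume u v := by
    intro u v hu hv
    apply ContinuousOn.intervalIntegrable
    exact hcontOn.mono (fun x hx => lt_of_le_of_lt hx.2 (max_lt hu hv))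
  -- h nonneg on [0,1)
  have hhnn : ∀ y : ℝ, 0 ≤ y → y < 1 → 0 ≤ h y := fun y hy hy1 =>
    div_nonneg (hbnn _ (mul_nonneg habβ.le hy)) (by linarith)
  -- g continuous below 1
  have hgderiv : ∀ x : ℝ, x < 1 → HasDerivAt g (h x) x := fun x hx =>
    intervalIntegral.integral_hasDerivAt_right (hInt 0 x one_pos hx)
      (ContinuousOn.stronglyMeasurableAtFilter isOpen_Iio hcontOn x hx)
      (hcontAt x hx)
  have hgcont : ∀ x : ℝ, x < 1 → ContinuousAt g x := fun x hx =>
    (hgderiv x hx).continuousAt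
  have hfcont : ∀ x : ℝ, x < 1 → ContinuousAt f x := by
    intro x hx
    have hne : (1 : ℝ) - x ≠ 0 := by linarith
    exact (((continuous_const.sub continuous_id).continuousAt).inv₀ hne).mul
      ((Real.continuous_exp.continuousAt).comp ((hgcont x hx).neg))
  -- the log integral
  have hlogint : ∀ u v : ℝ, u < 1 → v < 1 →
      (∫ x in u..v, (1 - x)⁻¹) = Real.log (1 - u) - Real.log (1 - v) := by
    intro u v hu hv
    have hd : ∀ x ∈ Set.uIcc u v, HasDerivAt (fun x => -Real.log (1 - x)) ((1 - x)⁻¹) x := by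
      intro x hx
      have hx1 : x < 1 := lt_of_le_of_lt hx.2 (max_lt hu hv)
      have h1 : HasDerivAt (fun x : ℝ => 1 - x) (-1) x := by
        simpa using (hasDerivAt_id x).const_sub 1
      have h2 := (Real.hasDerivAt_log (by linarith : (1:ℝ) - x ≠ 0)).comp x h1
      have h3 := h2.neg
      have h4 : HasDerivAt (fun x => -Real.log (1 - x)) (-((1 - x)⁻¹ * -1)) x := h3
      convert h4 using 1
      ring
    have hi : IntervalIntegrable (fun x : ℝ => (1 - x)⁻¹) volume u v := by
      apply ContinuousOn.intervalIntegrable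
      intro x hx
      have hx1 : x < 1 := lt_of_le_of_lt hx.2 (max_lt hu hv)
      exact (((continuous_const.sub continuous_id).continuousAt).inv₀
        (by linarith : (1:ℝ) - x ≠ 0)).continuousWithinAt
    rw [intervalIntegral.integral_eq_sub_of_hasDerivAt hd hi]
    ring
  -- bound on [0, δ]: g x ≤ δ/(1-δ) * b(aβδ)
  have hgle : ∀ x ∈ Set.Icc (0:ℝ) δ, g x ≤ δ / (1 - δ) * b (a * β * δ) := by
    intro x hx
    have hx1 : x < 1 := lt_of_le_of_lt hx.2 hδ1
    have hmono : (∫ y in (0:ℝ)..x, h y) ≤ ∫ _y in (0:ℝ)..x, b (a * β * δ) / (1 - δ) := by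
      apply intervalIntegral.integral_mono_on hx.1 (hInt 0 x one_pos hx1)
        intervalIntegrable_const
      intro y hy
      have hy1 : y ≤ δ := hy.2.trans hx.2
      apply div_le_div₀ (hbnn _ (mul_nonneg habβ.le hδ0.le))
      · exact hb_mono (mul_nonneg habβ.le hy.1)
          (mul_nonneg habβ.le hδ0.le)
          (by nlinarith)
      · linarith
      · linarith
    rw [intervalIntegral.integral_const] at hmono
    have : x * (b (a * β * δ) / (1 - δ)) ≤ δ * (b (a * β * δ) / (1 - δ)) := by
      apply mul_le_mul_of_nonneg_right hx.2
      exact div_nonneg (hbnn _ (mul_nonneg habβ.le hδ0.le)) (by linarith)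
    calc g x ≤ (x - 0) • (b (a * β * δ) / (1 - δ)) := hmono
      _ = x * (b (a * β * δ) / (1 - δ)) := by simp [smul_eq_mul]
      _ ≤ δ * (b (a * β * δ) / (1 - δ)) := this
      _ = δ / (1 - δ) * b (a * β * δ) := by ring
  -- integrability on [0, δ]
  have hfint_left : IntervalIntegrable f volume 0 δ := by
    apply ContinuousOn.intervalIntegrable
    intro x hx
    have hx1 : x < 1 := lt_of_le_of_lt hx.2 (max_lt one_pos hδ1)
    exact (hfcont x hx1).continuousWithinAt
  -- integrability on [δ, 1]: domination by M * (1-x)^(c-1)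
  set c : ℝ := b (a * β * δ) with hc_def
  have hc_pos : 0 < c := hb_pos _ (by positivity)
  set M : ℝ := Real.exp (-(c * Real.log (1 - δ))) with hM_def
  have hgδnn : 0 ≤ g δ :=
    intervalIntegral.integral_nonneg hδ0.le
      (fun y hy => hhnn y hy.1 (lt_of_le_of_lt hy.2 hδ1))
  have hkey : ∀ x ∈ Set.Ioo δ 1, f x ≤ M * (1 - x) ^ (c - 1) := by
    intro x hx
    obtain ⟨hxδ, hx1⟩ := hx
    have hx1' : (0:ℝ) < 1 - x := by linarith
    -- g x = g δ + ∫_δ^x h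
    have hadd := intervalIntegral.integral_add_adjacent_intervals
      (hInt 0 δ one_pos hδ1) (hInt δ x hδ1 hx1)
    -- ∫_δ^x h ≥ c ∫_δ^x (1-y)⁻¹
    have hlow : (∫ y in δ..x, c * (1 - y)⁻¹) ≤ ∫ y in δ..x, h y := by
      apply intervalIntegral.integral_mono_on hxδ.le _ (hInt δ x hδ1 hx1)
      · intro y hy
        have hyδ : δ ≤ y := hy.1
        have hy1 : y < 1 := lt_of_le_of_lt hy.2 hx1
        show c * (1 - y)⁻¹ ≤ b (a * β * y) / (1 - y)
        have hby : c ≤ b (a * β * y) :=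
          hb_mono (mul_nonneg habβ.le hδ0.le) (mul_nonneg habβ.le (hδ0.le.trans hyδ))
            (by nlinarith)
        rw [div_eq_mul_inv]
        exact mul_le_mul_of_nonneg_right hby (inv_nonneg.mpr (by linarith))
      · apply ContinuousOn.intervalIntegrable
        intro y hy
        have hy1 : y < 1 := lt_of_le_of_lt hy.2 (max_lt hδ1 hx1)
        exact (continuousAt_const.mul
          (((continuous_const.sub continuous_id).continuousAt).inv₀
            (by linarith : (1:ℝ) - y ≠ 0))).continuousWithinAt
    have hcint : (∫ y in δ..x, c * (1 - y)⁻¹)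
        = c * (Real.log (1 - δ) - Real.log (1 - x)) := by
      rw [intervalIntegral.integral_const_mul, hlogint δ x hδ1 hx1]
    have hgx : c * (Real.log (1 - δ) - Real.log (1 - x)) ≤ g x := by
      have : g x = g δ + ∫ y in δ..x, h y := by rw [hg_def]; exact hadd.symm
      rw [this]
      have := hlow
      rw [hcint] at this
      linarith
    have hexp : Real.exp (-g x) ≤ M * (1 - x) ^ c := by
      have h1 : Real.exp (-g x)
          ≤ Real.exp (-(c * (Real.log (1 - δ) - Real.log (1 - x)))) :=
        Real.exp_le_exp.mpr (by linarith)
      have h2 : Real.exp (-(c * (Real.log (1 - δ) - Real.log (1 - x))))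
          = M * (1 - x) ^ c := by
        rw [hM_def, Real.rpow_def_of_pos hx1', ← Real.exp_add]
        ring_nf
      rw [h2] at h1; exact h1
    calc f x = (1 - x)⁻¹ * Real.exp (-g x) := rfl
      _ ≤ (1 - x)⁻¹ * (M * (1 - x) ^ c) :=
        mul_le_mul_of_nonneg_left hexp (by positivity)
      _ = M * (1 - x) ^ (c - 1) := by
        rw [Real.rpow_sub hx1', Real.rpow_one]
        field_simp
  have hbd_int : IntervalIntegrable (fun x => M * (1 - x) ^ (c - 1)) volume δ 1 := by
    have h1 : IntervalIntegrable (fun t : ℝ => t ^ (c - 1)) volume 0 (1 - δ) :=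
      intervalIntegral.intervalIntegrable_rpow' (by linarith)
    have h2 := (h1.comp_sub_left 1).symm
    have h3 : (1:ℝ) - (1 - δ) = δ := by ring
    rw [h3, sub_zero] at h2
    exact h2.const_mul M
  have hf_meas : AEStronglyMeasurable f (volume.restrict (Set.Ioo δ 1)) := by
    apply ContinuousOn.aestronglyMeasurable _ measurableSet_Ioo
    exact fun x hx => (hfcont x hx.2).continuousWithinAt
  have hfint_right : IntervalIntegrable f volume δ 1 := by
    rw [intervalIntegrable_iff_integrableOn_Ioo_of_le hδ1.le]
    have hbound : IntegrableOn (fun x => M * (1 - x) ^ (c - 1)) (Set.Ioo δ 1) :=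
      (intervalIntegrable_iff_integrableOn_Ioo_of_le hδ1.le).mp hbd_int
    apply hbound.mono' hf_meas
    filter_upwards [ae_restrict_mem measurableSet_Ioo] with x hx
    have hx1' : (0:ℝ) < 1 - x := by linarith [hx.2]
    have hfnn : 0 ≤ f x := mul_nonneg (by positivity) (Real.exp_pos _).le
    rw [Real.norm_eq_abs, abs_of_nonneg hfnn]
    exact hkey x hx
  -- the tail integral is nonnegative
  have htail : 0 ≤ ∫ x in δ..1, f x := by
    apply intervalIntegral.integral_nonneg hδ1.le
    intro x hx
    have : (0:ℝ) ≤ 1 - x := by linarith [hx.2]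
    exact mul_nonneg (inv_nonneg.mpr this) (Real.exp_pos _).le
  -- lower bound for the head integral
  set K : ℝ := Real.exp (-(δ / (1 - δ)) * b (a * β * δ)) with hK_def
  have hhead : -Real.log (1 - δ) * K ≤ ∫ x in (0:ℝ)..δ, f x := by
    have hmono : (∫ x in (0:ℝ)..δ, (1 - x)⁻¹ * K) ≤ ∫ x in (0:ℝ)..δ, f x := by
      apply intervalIntegral.integral_mono_on hδ0.le _ hfint_left
      · intro x hx
        have hx1 : x < 1 := lt_of_le_of_lt hx.2 hδ1
        apply mul_le_mul_of_nonneg_left _ (inv_nonneg.mpr (by linarith))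
        rw [hK_def]
        apply Real.exp_le_exp.mpr
        have := hgle x hx
        nlinarith [hgle x hx]
      · apply ContinuousOn.intervalIntegrable
        intro x hx
        have hx1 : x < 1 := lt_of_le_of_lt hx.2 (max_lt one_pos hδ1)
        exact ((((continuous_const.sub continuous_id).continuousAt).inv₀
          (by linarith : (1:ℝ) - x ≠ 0)).mul continuousAt_const).continuousWithinAt
    have hcalc : (∫ x in (0:ℝ)..δ, (1 - x)⁻¹ * K) = -Real.log (1 - δ) * K := by
      rw [intervalIntegral.integral_mul_const, hlogint 0 δ one_pos hδ1]
      simp [Real.log_one]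
    linarith [hmono, hcalc.symm.le]
  -- assemble
  have hsplit : (∫ x in (0:ℝ)..1, f x)
      = (∫ x in (0:ℝ)..δ, f x) + ∫ x in δ..1, f x :=
    (intervalIntegral.integral_add_adjacent_intervals hfint_left hfint_right).symm
  have hCge : -Real.log (1 - δ) * K ≤ Cfun a b β := by
    rw [hC, hsplit]; linarith
  calc -β * Real.log (1 - δ) * Real.exp (-(δ / (1 - δ)) * b (a * β * δ))
      = β * (-Real.log (1 - δ) * K) := by rw [hK_def]; ring
    _ ≤ β * Cfun a b β := mul_le_mul_of_nonneg_left hCge hβ.le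
end

section
/- If b(x)/x → 0 as x → 0⁺, then β·C(β) → +∞ as β → 0⁺. -/
open MeasureTheory Real Filter Set

lemma integral_one_sub_inv {x : ℝ} (hx : x < 1) (hx0 : 0 ≤ x) :
    ∫ y in (0:ℝ)..x, (1 - y)⁻¹ = - Real.log (1 - x) := by
  have h := intervalIntegral.integral_comp_sub_left (a := (0:ℝ)) (b := x)
    (fun u => u⁻¹) 1
  rw [h, integral_inv]
  · rw [sub_zero, Real.log_div one_ne_zero (by linarith), Real.log_one, zero_sub]
  · intro hmem
    rw [Set.mem_uIcc] at hmem
    rcases hmem with ⟨h1, _⟩ | ⟨_, h2⟩ <;> linarith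

/-- Main quantitative lower bound: `C(β) ≥ 1 / b(aβ)` for `β > 0`. -/
lemma Cfun_lower (a : ℝ) (ha : 0 < a) (b : ℝ → ℝ) (hb_cont : Continuous b)
    (hb_mono : MonotoneOn b (Set.Ici 0)) (hb0 : 0 ≤ b 0)
    (hb_pos : ∀ x > (0:ℝ), 0 < b x) (β : ℝ) (hβ : 0 < β) :
    (b (a * β))⁻¹ ≤ Cfun a b β := by
  have haβ : 0 < a * β := mul_pos ha hβ
  set c : ℝ := b (a * β) with hc_def
  have hc : 0 < c := hb_pos _ haβ
  set c₀ : ℝ := b (a * β * (1/2)) with hc₀_def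
  have hc₀ : 0 < c₀ := hb_pos _ (by positivity)
  set g : ℝ → ℝ := fun y => b (a * β * y) / (1 - y) with hg_def
  have hg_cont : ContinuousOn g (Iio 1) := by
    apply ContinuousOn.div
    · exact (hb_cont.comp (continuous_const.mul continuous_id)).continuousOn
    · exact (continuous_const.sub continuous_id).continuousOn
    · intro y hy
      simp only [mem_Iio] at hy
      intro h; linarith [sub_eq_zero.mp h]
  have hg_int : ∀ s t : ℝ, s ≤ t → t < 1 → IntervalIntegrable g volume s t := by
    intro s t hs ht
    apply (hg_cont.mono _).intervalIntegrable
    intro y hy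
    rw [Set.uIcc_of_le hs] at hy
    exact mem_Iio.mpr (lt_of_le_of_lt hy.2 ht)
  have hg_nonneg : ∀ y : ℝ, 0 ≤ y → y < 1 → 0 ≤ g y := by
    intro y hy0 hy1
    apply div_nonneg _ (by linarith)
    exact le_trans hb0 (hb_mono (Set.mem_Ici.mpr le_rfl) (Set.mem_Ici.mpr (by positivity)) (by positivity))
  set I : ℝ → ℝ := fun x => ∫ y in (0:ℝ)..x, g y with hI_def
  -- upper bound for I
  have hI_upper : ∀ x : ℝ, 0 ≤ x → x < 1 → I x ≤ c * (- Real.log (1 - x)) := by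
    intro x hx0 hx1
    have h1 : I x ≤ ∫ y in (0:ℝ)..x, c * (1 - y)⁻¹ := by
      apply intervalIntegral.integral_mono_on hx0 (hg_int 0 x hx0 hx1)
      · exact (IntervalIntegrable.const_mul (((continuousOn_const.sub continuousOn_id).inv₀
          (fun y hy => by
            rw [Set.uIcc_of_le (by linarith : (0:ℝ) ≤ x)] at hy
            intro h; rw [Pi.sub_apply, sub_eq_zero] at h; simp only [id_eq] at h; linarith [hy.2])).intervalIntegrable) c)
      · intro y hy
        have hy0 : 0 ≤ y := hy.1
        have hy1 : y < 1 := lt_of_le_of_lt hy.2 hx1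
        rw [hg_def]
        simp only
        rw [div_eq_mul_inv]
        apply mul_le_mul_of_nonneg_right _ (inv_nonneg.mpr (by linarith))
        exact hb_mono (Set.mem_Ici.mpr (by positivity)) (Set.mem_Ici.mpr haβ.le)
          (by nlinarith)
    rwa [intervalIntegral.integral_const_mul, integral_one_sub_inv hx1 hx0] at h1
  -- lower bound for I on (1/2, 1)
  have hI_lower : ∀ x : ℝ, 1/2 < x → x < 1 → c₀ * (Real.log (1/2) - Real.log (1 - x)) ≤ I x := by
    intro x hx2 hx1
    have hsplit : I x = (∫ y in (0:ℝ)..(1/2:ℝ), g y) + ∫ y in (1/2:ℝ)..x, g y :=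
      (intervalIntegral.integral_add_adjacent_intervals (hg_int 0 (1/2) (by norm_num) (by norm_num))
        (hg_int (1/2) x hx2.le hx1)).symm
    have h1 : (0:ℝ) ≤ ∫ y in (0:ℝ)..(1/2:ℝ), g y := by
      apply intervalIntegral.integral_nonneg (by norm_num)
      intro y hy
      exact hg_nonneg y hy.1 (lt_of_le_of_lt hy.2 (by norm_num))
    have h2 : ∫ y in (1/2:ℝ)..x, c₀ * (1 - y)⁻¹ ≤ ∫ y in (1/2:ℝ)..x, g y := by
      apply intervalIntegral.integral_mono_on hx2.le
      · exact (IntervalIntegrable.const_mul (((continuousOn_const.sub continuousOn_id).inv₀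
          (fun y hy => by
            rw [Set.uIcc_of_le hx2.le] at hy
            intro h; rw [Pi.sub_apply, sub_eq_zero] at h; simp only [id_eq] at h; linarith [hy.2])).intervalIntegrable) c₀)
      · exact hg_int (1/2) x hx2.le hx1
      · intro y hy
        have hy2 : 1/2 ≤ y := hy.1
        have hy1 : y < 1 := lt_of_le_of_lt hy.2 hx1
        rw [hg_def]
        simp only
        rw [div_eq_mul_inv]
        apply mul_le_mul_of_nonneg_right _ (inv_nonneg.mpr (by linarith))
        exact hb_mono (Set.mem_Ici.mpr (by positivity)) (Set.mem_Ici.mpr (by positivity))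
          (by nlinarith)
    have h3 : ∫ y in (1/2:ℝ)..x, c₀ * (1 - y)⁻¹ = c₀ * (Real.log (1/2) - Real.log (1 - x)) := by
      rw [intervalIntegral.integral_const_mul]
      congr 1
      have hc1 : ∫ y in (0:ℝ)..x, (1 - y)⁻¹ = - Real.log (1 - x) :=
        integral_one_sub_inv hx1 (by linarith)
      have hc2 : ∫ y in (0:ℝ)..(1/2:ℝ), (1 - y)⁻¹ = - Real.log (1 - 1/2) :=
        integral_one_sub_inv (by norm_num) (by norm_num)
      have hadd : (∫ y in (0:ℝ)..(1/2:ℝ), (1 - y)⁻¹) + ∫ y in (1/2:ℝ)..x, (1 - y)⁻¹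
          = ∫ y in (0:ℝ)..x, (1 - y)⁻¹ := by
        apply intervalIntegral.integral_add_adjacent_intervals <;>
        · apply ContinuousOn.intervalIntegrable
          apply (continuousOn_const.sub continuousOn_id).inv₀
          intro y hy
          rcases Set.mem_uIcc.mp hy with ⟨_, hu⟩ | ⟨_, hu⟩ <;>
            (intro h; rw [Pi.sub_apply, sub_eq_zero] at h; simp only [id_eq] at h; linarith)
      rw [hc1, hc2] at hadd
      norm_num at hadd ⊢
      linarith
    rw [hsplit, ← h3]
    linarith
  set F : ℝ → ℝ := fun x => (1 - x)⁻¹ * Real.exp (-(I x)) with hF_def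
  -- pointwise lower bound for F
  have hF_lb : ∀ x : ℝ, 0 ≤ x → x < 1 → (1 - x) ^ (c - 1) ≤ F x := by
    intro x hx0 hx1
    have h1x : (0:ℝ) < 1 - x := by linarith
    have he : (1 - x) ^ c ≤ Real.exp (-(I x)) := by
      rw [Real.rpow_def_of_pos h1x]
      apply Real.exp_le_exp.mpr
      have := hI_upper x hx0 hx1
      nlinarith [this]
    calc (1 - x) ^ (c - 1) = (1 - x) ^ c * (1 - x)⁻¹ := by
          rw [Real.rpow_sub h1x, Real.rpow_one, div_eq_mul_inv]
      _ ≤ Real.exp (-(I x)) * (1 - x)⁻¹ := by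
          apply mul_le_mul_of_nonneg_right he (by positivity)
      _ = F x := by rw [hF_def]; ring
  -- pointwise upper bound for F on (1/2, 1)
  have hF_ub : ∀ x : ℝ, 1/2 < x → x < 1 → F x ≤ (2:ℝ) ^ c₀ * (1 - x) ^ (c₀ - 1) := by
    intro x hx2 hx1
    have h1x : (0:ℝ) < 1 - x := by linarith
    have he : Real.exp (-(I x)) ≤ (2:ℝ) ^ c₀ * (1 - x) ^ c₀ := by
      have h2 : ((2:ℝ) ^ c₀ * (1 - x) ^ c₀ : ℝ) = Real.exp (c₀ * (Real.log 2 + Real.log (1 - x))) := by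
        rw [Real.rpow_def_of_pos (by norm_num : (0:ℝ) < 2), Real.rpow_def_of_pos h1x,
          ← Real.exp_add]
        ring_nf
      rw [h2]
      apply Real.exp_le_exp.mpr
      have := hI_lower x hx2 hx1
      have hlog : Real.log (1/2) = - Real.log 2 := by
        rw [one_div, Real.log_inv]
      rw [hlog] at this
      nlinarith [this]
    calc F x = (1 - x)⁻¹ * Real.exp (-(I x)) := rfl
      _ ≤ (1 - x)⁻¹ * ((2:ℝ) ^ c₀ * (1 - x) ^ c₀) := by
          apply mul_le_mul_of_nonneg_left he (by positivity)
      _ = (2:ℝ) ^ c₀ * (1 - x) ^ (c₀ - 1) := by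
          rw [Real.rpow_sub h1x, Real.rpow_one, div_eq_mul_inv]
          ring
  -- continuity of F on [0,1)
  have hF_cont : ContinuousOn F (Ico 0 1) := by
    have hI_cont : ContinuousOn I (Ico 0 1) := by
      intro x hx
      set t : ℝ := (x + 1) / 2 with ht_def
      have hxt : x < t := by rw [ht_def]; linarith [hx.2]
      have ht1 : t < 1 := by rw [ht_def]; linarith [hx.2]
      have hcont : ContinuousOn I (Set.uIcc 0 t) := by
        apply intervalIntegral.continuousOn_primitive_interval'
        · exact hg_int 0 t (by linarith [hx.1]) ht1
        · exact Set.left_mem_uIcc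
      have hx_mem : x ∈ Set.uIcc (0:ℝ) t := by
        rw [Set.uIcc_of_le (by linarith [hx.1] : (0:ℝ) ≤ t)]
        exact ⟨hx.1, hxt.le⟩
      apply (hcont x hx_mem).mono_of_mem_nhdsWithin
      rw [mem_nhdsWithin]
      refine ⟨Iio t, isOpen_Iio, hxt, ?_⟩
      intro y hy
      rw [Set.uIcc_of_le (by linarith [hx.1] : (0:ℝ) ≤ t)]
      exact ⟨hy.2.1, le_of_lt hy.1⟩
    apply ContinuousOn.mul
    · apply ContinuousOn.inv₀ (continuousOn_const.sub continuousOn_id)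
      intro y hy
      intro h; rw [Pi.sub_apply, sub_eq_zero] at h; simp only [id_eq] at h; rcases hy with ⟨_, h2⟩; linarith
    · exact Real.continuous_exp.comp_continuousOn hI_cont.neg
  -- F is nonnegative on [0,1)
  have hF_nonneg : ∀ x : ℝ, x < 1 → 0 ≤ F x := by
    intro x hx1
    have h1x : (0:ℝ) ≤ 1 - x := by linarith
    apply mul_nonneg (by positivity) (Real.exp_nonneg _)
  -- integrability of F
  have hF_int : IntervalIntegrable F volume 0 1 := by
    rw [intervalIntegrable_iff_integrableOn_Ioc_of_le (by norm_num)]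
    have h1 : IntegrableOn F (Ioc 0 (1/2)) := by
      apply IntegrableOn.mono_set _ Ioc_subset_Icc_self
      apply ContinuousOn.integrableOn_Icc
      apply hF_cont.mono
      intro y hy
      exact ⟨hy.1, lt_of_le_of_lt hy.2 (by norm_num)⟩
    have h2 : IntegrableOn F (Ioc (1/2) 1) := by
      rw [IntegrableOn, ← Measure.restrict_congr_set Ioo_ae_eq_Ioc]
      have hbnd : IntegrableOn (fun x => (2:ℝ) ^ c₀ * (1 - x) ^ (c₀ - 1)) (Ioo (1/2:ℝ) 1) := by
        have hri : IntervalIntegrable (fun x : ℝ => (1 - x) ^ (c₀ - 1)) volume (1/2) 1 := by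
          have := (intervalIntegral.intervalIntegrable_rpow' (a := (1/2:ℝ)) (b := (0:ℝ))
            (r := c₀ - 1) (by linarith)).comp_sub_left 1
          norm_num at this
          exact this
        have := (hri.const_mul ((2:ℝ) ^ c₀))
        rw [intervalIntegrable_iff_integrableOn_Ioc_of_le (by norm_num)] at this
        exact this.mono_set Ioo_subset_Ioc_self
      apply Integrable.mono' hbnd
      · apply (hF_cont.mono _).aestronglyMeasurable measurableSet_Ioo
        intro y hy
        exact ⟨by linarith [hy.1], hy.2⟩
      · filter_upwards [ae_restrict_mem measurableSet_Ioo] with x hx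
        rw [Real.norm_eq_abs, abs_of_nonneg (hF_nonneg x hx.2)]
        exact hF_ub x hx.1 hx.2
    have := h1.union h2
    apply this.mono_set
    rw [Set.Ioc_union_Ioc_eq_Ioc (by norm_num) (by norm_num)]
  -- base integral
  have hbase_int : IntervalIntegrable (fun x : ℝ => (1 - x) ^ (c - 1)) volume 0 1 := by
    have := (intervalIntegral.intervalIntegrable_rpow' (a := (1:ℝ)) (b := (0:ℝ))
      (r := c - 1) (by linarith)).comp_sub_left 1
    norm_num at this
    exact this
  have hbase_val : ∫ x in (0:ℝ)..1, (1 - x) ^ (c - 1) = c⁻¹ := by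
    have h := intervalIntegral.integral_comp_sub_left (a := (0:ℝ)) (b := 1)
      (fun u => u ^ (c - 1)) 1
    rw [h]
    norm_num
    rw [integral_rpow (Or.inl (by linarith : (-1:ℝ) < c - 1))]
    rw [sub_add_cancel, Real.one_rpow, Real.zero_rpow hc.ne']
    rw [sub_zero, one_div]
  -- comparison
  have hmono : ∫ x in (0:ℝ)..1, (1 - x) ^ (c - 1) ≤ ∫ x in (0:ℝ)..1, F x := by
    apply intervalIntegral.integral_mono_ae_restrict (by norm_num) hbase_int hF_int
    have hne : ∀ᵐ x : ℝ ∂volume, x ≠ (1:ℝ) := by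
      rw [ae_iff]
      simp only [not_not, setOf_eq_eq_singleton]
      exact measure_singleton 1
    filter_upwards [ae_restrict_mem measurableSet_Icc, ae_restrict_of_ae hne] with x hx hx1
    exact hF_lb x hx.1 (lt_of_le_of_ne hx.2 hx1)
  have : Cfun a b β = ∫ x in (0:ℝ)..1, F x := rfl
  rw [this, ← hbase_val]
  exact hmono

/-- if `b(x)/x → 0` as `x → 0⁺`, then `β C(β) → ∞` as `β → 0⁺`. -/
theorem betaC_tendsto_atTop_of_slope_zero
    (a : ℝ) (ha : 0 < a) (b : ℝ → ℝ)
    (hb_cont : Continuous b) (hb_mono : MonotoneOn b (Set.Ici 0))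
    (hb0 : 0 ≤ b 0) (hb_pos : ∀ x > (0:ℝ), 0 < b x)
    (hslope : Tendsto (fun x => b x / x) (nhdsWithin 0 (Set.Ioi 0)) (nhds 0)) :
    Tendsto (fun β => β * Cfun a b β) (nhdsWithin 0 (Set.Ioi 0)) atTop := by
  -- x / b x → ∞
  have h1 : Tendsto (fun x => b x / x) (nhdsWithin 0 (Set.Ioi 0)) (nhdsWithin 0 (Set.Ioi 0)) := by
    apply tendsto_nhdsWithin_of_tendsto_nhds_of_eventually_within _ hslope
    filter_upwards [self_mem_nhdsWithin] with x hx
    exact div_pos (hb_pos x hx) hx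
  have h2 : Tendsto (fun x => (b x / x)⁻¹) (nhdsWithin 0 (Set.Ioi 0)) atTop :=
    h1.inv_tendsto_nhdsGT_zero
  -- β ↦ a * β maps 𝓝[>]0 to 𝓝[>]0
  have h3 : Tendsto (fun β : ℝ => a * β) (nhdsWithin 0 (Set.Ioi 0)) (nhdsWithin 0 (Set.Ioi 0)) := by
    apply tendsto_nhdsWithin_of_tendsto_nhds_of_eventually_within
    · have : Tendsto (fun β : ℝ => a * β) (nhds 0) (nhds (a * 0)) :=
        (continuous_const.mul continuous_id).tendsto 0
      rw [mul_zero] at this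
      exact this.mono_left nhdsWithin_le_nhds
    · filter_upwards [self_mem_nhdsWithin] with β hβ
      exact mul_pos ha hβ
  have h4 : Tendsto (fun β : ℝ => (b (a * β) / (a * β))⁻¹) (nhdsWithin 0 (Set.Ioi 0)) atTop :=
    h2.comp h3
  have h5 : Tendsto (fun β : ℝ => a⁻¹ * (b (a * β) / (a * β))⁻¹) (nhdsWithin 0 (Set.Ioi 0)) atTop :=
    Tendsto.const_mul_atTop (by positivity) h4
  apply tendsto_atTop_mono' _ _ h5
  filter_upwards [self_mem_nhdsWithin] with β hβ
  have hβ' : (0:ℝ) < β := hβ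
  have haβ : 0 < a * β := mul_pos ha hβ'
  have hbaβ : 0 < b (a * β) := hb_pos _ haβ
  have hC := Cfun_lower a ha b hb_cont hb_mono hb0 hb_pos β hβ'
  have key : a⁻¹ * (b (a * β) / (a * β))⁻¹ = β * (b (a * β))⁻¹ := by
    rw [div_eq_mul_inv, mul_inv, inv_inv]
    field_simp
  rw [key]
  exact mul_le_mul_of_nonneg_left hC hβ'.le
end

section
/- If b(x)/x → +∞ as x → 0⁺, then β·C(β) → 0 as β → 0⁺. -/
open MeasureTheory Real Filter Set

lemma aux_integral_rpow (c : ℝ) (hc : 0 < c) :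
    ∫ x in (0:ℝ)..1, (1 - x) ^ (c - 1) = 1 / c := by
  have h := intervalIntegral.integral_comp_sub_left (a := (0:ℝ)) (b := 1)
    (fun x => x ^ (c - 1)) 1
  simp only [sub_zero, sub_self] at h
  rw [h, integral_rpow (Or.inl (by linarith))]
  rw [sub_add_cancel, Real.one_rpow, Real.zero_rpow hc.ne']
  ring

lemma aux_integral_inv (x : ℝ) (hx : x < 1) :
    ∫ y in (0:ℝ)..x, (1 - y)⁻¹ = -Real.log (1 - x) := by
  have h := intervalIntegral.integral_comp_sub_left (a := (0:ℝ)) (b := x)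
    (fun y => y⁻¹) 1
  simp only [sub_zero] at h
  rw [h, integral_inv (by
    intro hmem
    rcases Set.mem_uIcc.mp hmem with ⟨h1, _⟩ | ⟨_, h2⟩ <;> linarith)]
  rw [Real.log_div one_ne_zero (by linarith), Real.log_one]
  ring

lemma aux_g_integrable (c : ℝ) (hc : 0 < c) :
    IntegrableOn (fun x => Real.exp c * (1 - x) ^ (c - 1)) (Set.Ioc (0:ℝ) 1) := by
  have h : IntervalIntegrable (fun x : ℝ => x ^ (c - 1)) volume 0 1 :=
    intervalIntegral.intervalIntegrable_rpow' (by linarith)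
  have h2 := ((h.comp_sub_left 1).symm.const_mul (Real.exp c))
  simp only [sub_zero, sub_self] at h2
  have := intervalIntegrable_iff.mp h2
  rwa [Set.uIoc_of_le (by norm_num : (0:ℝ) ≤ 1)] at this

lemma Cfun_le (a : ℝ) (b : ℝ → ℝ) (β c : ℝ) (hc : 0 < c) (hb_cont : Continuous b)
    (hbd : ∀ y ∈ Set.Icc (0:ℝ) 1, c * y ≤ b (a * β * y)) :
    Cfun a b β ≤ Real.exp c / c := by
  set f : ℝ → ℝ := fun x =>
    (1 - x)⁻¹ * Real.exp (-∫ y in (0:ℝ)..x, b (a * β * y) / (1 - y)) with hf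
  set g : ℝ → ℝ := fun x => Real.exp c * (1 - x) ^ (c - 1) with hg
  have hfg : ∀ x ∈ Set.Ioc (0:ℝ) 1, f x ≤ g x := by
    intro x hx
    have hg0 : 0 ≤ g x := by
      apply mul_nonneg (Real.exp_pos c).le
      exact Real.rpow_nonneg (by linarith [hx.2]) _
    rcases eq_or_lt_of_le hx.2 with h1 | hx1
    · have hf1 : f x = 0 := by simp [hf, h1]
      rw [hf1]; exact hg0
    have h1x : 0 < 1 - x := by linarith
    -- integrability of the inner integrands
    have hcont1 : ContinuousOn (fun y : ℝ => b (a * β * y) / (1 - y)) (Set.Icc 0 x) := by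
      apply ContinuousOn.div
      · exact (hb_cont.comp (continuous_const.mul continuous_id)).continuousOn
      · exact (continuous_const.sub continuous_id).continuousOn
      · intro y hy h0
        linarith [hy.2, hx1]
    have hcont2 : ContinuousOn (fun y : ℝ => c * y / (1 - y)) (Set.Icc 0 x) := by
      apply ContinuousOn.div
      · exact (continuous_const.mul continuous_id).continuousOn
      · exact (continuous_const.sub continuous_id).continuousOn
      · intro y hy h0
        linarith [hy.2, hx1]
    have huIcc : Set.uIcc (0:ℝ) x = Set.Icc 0 x := Set.uIcc_of_le hx.1.le
    have hint1 : IntervalIntegrable (fun y : ℝ => b (a * β * y) / (1 - y)) volume 0 x := by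
      apply ContinuousOn.intervalIntegrable; rwa [huIcc]
    have hint2 : IntervalIntegrable (fun y : ℝ => c * y / (1 - y)) volume 0 x := by
      apply ContinuousOn.intervalIntegrable; rwa [huIcc]
    -- lower bound on the inner integral
    have hmono : (∫ y in (0:ℝ)..x, c * y / (1 - y))
        ≤ ∫ y in (0:ℝ)..x, b (a * β * y) / (1 - y) := by
      apply intervalIntegral.integral_mono_on hx.1.le hint2 hint1
      intro y hy
      have h1y : 0 < 1 - y := by linarith [hy.2, hx1]
      have hby : c * y ≤ b (a * β * y) :=
        hbd y ⟨hy.1, hy.2.trans hx.2⟩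
      exact (div_le_div_iff_of_pos_right h1y).mpr hby
    -- compute the comparison integral
    have hcomp : (∫ y in (0:ℝ)..x, c * y / (1 - y))
        = c * (-Real.log (1 - x)) - c * x := by
      have heq : Set.EqOn (fun y : ℝ => c * y / (1 - y))
          (fun y : ℝ => c * (1 - y)⁻¹ - c) (Set.uIcc 0 x) := by
        intro y hy
        rw [huIcc] at hy
        have h1y : (1 : ℝ) - y ≠ 0 := by
          intro h0
          linarith [hy.2, hx1]
        field_simp
        ring
      rw [intervalIntegral.integral_congr heq]
      have hintinv : IntervalIntegrable (fun y : ℝ => (1 - y)⁻¹) volume 0 x := by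
        apply ContinuousOn.intervalIntegrable
        rw [huIcc]
        apply ContinuousOn.inv₀ (continuous_const.sub continuous_id).continuousOn
        intro y hy h0
        simp only [Pi.sub_apply, id_eq] at h0
        linarith [hy.2, hx1]
      rw [intervalIntegral.integral_sub (hintinv.const_mul c)
        (intervalIntegrable_const), intervalIntegral.integral_const_mul,
        aux_integral_inv x hx1, intervalIntegral.integral_const]
      simp
      ring
    -- put the bound together
    have hIle : c * (-Real.log (1 - x)) - c * x
        ≤ ∫ y in (0:ℝ)..x, b (a * β * y) / (1 - y) := hcomp ▸ hmono
    have hexp : Real.exp (-∫ y in (0:ℝ)..x, b (a * β * y) / (1 - y))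
        ≤ Real.exp (c * Real.log (1 - x) + c * x) := by
      apply Real.exp_le_exp.mpr
      nlinarith [hIle]
    have hrpow : Real.exp (c * Real.log (1 - x) + c * x)
        = (1 - x) ^ c * Real.exp (c * x) := by
      rw [Real.exp_add, Real.rpow_def_of_pos h1x, mul_comm (Real.log (1 - x)) c]
    have step1 : f x ≤ (1 - x)⁻¹ * ((1 - x) ^ c * Real.exp (c * x)) := by
      rw [← hrpow]
      exact mul_le_mul_of_nonneg_left hexp (by positivity)
    have hpow : (1 - x)⁻¹ * (1 - x) ^ c = (1 - x) ^ (c - 1) := by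
      rw [Real.rpow_sub h1x, Real.rpow_one, div_eq_mul_inv, mul_comm]
    have hexpx : Real.exp (c * x) ≤ Real.exp c := by
      apply Real.exp_le_exp.mpr
      nlinarith [hx.2, hc]
    calc f x ≤ (1 - x)⁻¹ * ((1 - x) ^ c * Real.exp (c * x)) := step1
      _ = ((1 - x)⁻¹ * (1 - x) ^ c) * Real.exp (c * x) := by ring
      _ = (1 - x) ^ (c - 1) * Real.exp (c * x) := by rw [hpow]
      _ ≤ (1 - x) ^ (c - 1) * Real.exp c := by
          exact mul_le_mul_of_nonneg_left hexpx (Real.rpow_nonneg h1x.le _)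
      _ = g x := by rw [hg]; ring
  have hgint := aux_g_integrable c hc
  have hmain : Cfun a b β ≤ ∫ x in Set.Ioc (0:ℝ) 1, g x := by
    rw [Cfun, intervalIntegral.integral_of_le (by norm_num : (0:ℝ) ≤ 1)]
    apply integral_mono_of_nonneg
    · refine (ae_restrict_iff' measurableSet_Ioc).mpr (ae_of_all _ ?_)
      intro x hx
      have : 0 ≤ 1 - x := by linarith [hx.2]
      positivity
    · exact hgint
    · exact (ae_restrict_iff' measurableSet_Ioc).mpr (ae_of_all _ hfg)
  have hgval : (∫ x in Set.Ioc (0:ℝ) 1, g x) = Real.exp c / c := by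
    rw [← intervalIntegral.integral_of_le (by norm_num : (0:ℝ) ≤ 1)]
    simp only [hg]
    rw [intervalIntegral.integral_const_mul, aux_integral_rpow c hc]
    ring
  rw [hgval] at hmain
  exact hmain

/-- if `b(x)/x → ∞` as `x → 0⁺`, then `β C(β) → 0` as `β → 0⁺`. -/
theorem betaC_tendsto_zero_of_slope_infinite
    (a : ℝ) (ha : 0 < a) (b : ℝ → ℝ)
    (hb_cont : Continuous b) (hb_mono : MonotoneOn b (Set.Ici 0))
    (hb0 : 0 ≤ b 0) (hb_pos : ∀ x > (0:ℝ), 0 < b x)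
    (hslope : Tendsto (fun x => b x / x) (nhdsWithin 0 (Set.Ioi 0)) atTop) :
    Tendsto (fun β => β * Cfun a b β) (nhdsWithin 0 (Set.Ioi 0)) (nhds 0) := by
  rw [Metric.tendsto_nhdsWithin_nhds]
  intro ε hε
  set M : ℝ := max 1 (3 / (a * ε)) with hM
  have hM1 : (1:ℝ) ≤ M := le_max_left _ _
  have hMpos : 0 < M := by linarith
  have hM3 : 3 / (a * ε) ≤ M := le_max_right _ _
  have hMa : 0 < M * a := by positivity
  -- get δ₁ from the slope hypothesis
  have hev : ∀ᶠ x in nhdsWithin 0 (Set.Ioi 0), M ≤ b x / x :=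
    hslope.eventually (eventually_ge_atTop M)
  rw [Filter.eventually_iff, Metric.mem_nhdsWithin_iff] at hev
  obtain ⟨δ₁, hδ₁pos, hδ₁⟩ := hev
  refine ⟨min (δ₁ / a) (1 / (M * a)), by positivity, ?_⟩
  intro β hβ hdist
  have hβpos : 0 < β := hβ
  rw [Real.dist_eq, sub_zero, abs_of_pos hβpos] at hdist
  have hβδ₁ : β < δ₁ / a := lt_of_lt_of_le hdist (min_le_left _ _)
  have hβMa : β < 1 / (M * a) := lt_of_lt_of_le hdist (min_le_right _ _)
  set c : ℝ := M * a * β with hcdef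
  have hc : 0 < c := by positivity
  have hc1 : c ≤ 1 := by
    rw [hcdef]
    calc M * a * β ≤ M * a * (1 / (M * a)) := by
          exact mul_le_mul_of_nonneg_left hβMa.le hMa.le
      _ = 1 := by field_simp
  -- pointwise lower bound for b
  have hbd : ∀ y ∈ Set.Icc (0:ℝ) 1, c * y ≤ b (a * β * y) := by
    intro y hy
    rcases eq_or_lt_of_le hy.1 with h0 | hy0
    · simp only [← h0, mul_zero]
      exact hb0
    · have hx'pos : 0 < a * β * y := by positivity
      have hx'lt : a * β * y < δ₁ := by
        have hab : β * a < δ₁ := (lt_div_iff₀ ha).mp hβδ₁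
        calc a * β * y ≤ a * β * 1 :=
              mul_le_mul_of_nonneg_left hy.2 (by positivity)
          _ = β * a := by ring
          _ < δ₁ := hab
      have hMle : M ≤ b (a * β * y) / (a * β * y) := by
        apply hδ₁
        refine ⟨Metric.mem_ball.mpr ?_, hx'pos⟩
        rw [Real.dist_eq, sub_zero, abs_of_pos hx'pos]
        exact hx'lt
      have := (le_div_iff₀ hx'pos).mp hMle
      calc c * y = M * (a * β * y) := by rw [hcdef]; ring
        _ ≤ b (a * β * y) := this
  have hkey := Cfun_le a b β c hc hb_cont hbd
  -- nonnegativity of Cfun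
  have hCnonneg : 0 ≤ Cfun a b β := by
    apply intervalIntegral.integral_nonneg (by norm_num : (0:ℝ) ≤ 1)
    intro x hx
    have : 0 ≤ 1 - x := by linarith [hx.2]
    positivity
  have hβC : 0 ≤ β * Cfun a b β := mul_nonneg hβpos.le hCnonneg
  rw [Real.dist_eq, sub_zero, abs_of_nonneg hβC]
  have hub : β * Cfun a b β ≤ Real.exp c / (M * a) := by
    calc β * Cfun a b β ≤ β * (Real.exp c / c) :=
          mul_le_mul_of_nonneg_left hkey hβpos.le
      _ = Real.exp c / (M * a) := by
          rw [hcdef]; field_simp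
  have hexpc : Real.exp c < 3 := by
    calc Real.exp c ≤ Real.exp 1 := Real.exp_le_exp.mpr hc1
      _ < 3 := by
        have := Real.exp_one_lt_d9
        linarith
  have h3 : 3 / (M * a) ≤ ε := by
    rw [div_le_iff₀ hMa]
    have : 3 / (a * ε) * (a * ε) ≤ M * (a * ε) :=
      mul_le_mul_of_nonneg_right hM3 (by positivity)
    rw [div_mul_cancel₀] at this
    · nlinarith
    · positivity
  calc β * Cfun a b β ≤ Real.exp c / (M * a) := hub
    _ < 3 / (M * a) := (div_lt_div_iff_of_pos_right hMa).mpr hexpc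
    _ ≤ ε := h3
end

section
/- If there exists δ > 0 such that b(x) ≤ δ·x for all x ∈ [0, aβ], then β·C(β) ≥ 1/(δ·a). -/
open MeasureTheory Real Filter Set

/-- `∫ y in s..x, (1-y)⁻¹ = log(1-s) - log(1-x)` for `s, x < 1`. -/
lemma integral_inv_one_sub {s x : ℝ} (hs : s < 1) (hx : x < 1) :
    ∫ y in s..x, (1 - y)⁻¹ = Real.log (1 - s) - Real.log (1 - x) := by
  have h := intervalIntegral.integral_comp_sub_left (a := s) (b := x)
    (fun z : ℝ => z⁻¹) 1
  rw [h, integral_inv, Real.log_div (by linarith) (by linarith)]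
  intro h0
  rcases Set.mem_uIcc.1 h0 with ⟨h1, _⟩ | ⟨h1, _⟩ <;> linarith

/-- `(fun x => (1-x) ^ r)` is interval integrable on `[0,1]` for `r > -1`. -/
lemma intervalIntegrable_one_sub_rpow {r : ℝ} (hr : -1 < r) :
    IntervalIntegrable (fun x : ℝ => (1 - x) ^ r) volume 0 1 := by
  have h := (intervalIntegral.intervalIntegrable_rpow' (a := 0) (b := 1) hr).comp_sub_left 1
  simpa using h.symm

/-- `∫ x in 0..1, (1-x) ^ r = 1/(r+1)` for `r > -1`. -/
lemma integral_one_sub_rpow {r : ℝ} (hr : -1 < r) :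
    ∫ x in (0:ℝ)..1, (1 - x) ^ r = 1 / (r + 1) := by
  have h := intervalIntegral.integral_comp_sub_left (a := (0:ℝ)) (b := 1)
    (fun z : ℝ => z ^ r) 1
  rw [h]
  norm_num
  rw [integral_rpow (Or.inl hr), Real.one_rpow, Real.zero_rpow (by linarith)]
  ring

/-- if there exists `δ > 0` with `b(x) ≤ δ x` for all
`x ∈ [0, aβ]`, then `β C(β) ≥ 1/(δ a)`. -/
theorem betaC_lower_bound_of_linear_domination
    (a : ℝ) (ha : 0 < a) (b : ℝ → ℝ)
    (hb_cont : Continuous b) (hb_mono : MonotoneOn b (Set.Ici 0))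
    (hb0 : 0 ≤ b 0) (hb_pos : ∀ x > (0:ℝ), 0 < b x)
    (β δ : ℝ) (hβ : 0 < β) (hδ : 0 < δ)
    (hdom : ∀ x ∈ Set.Icc (0:ℝ) (a * β), b x ≤ δ * x) :
    1 / (δ * a) ≤ β * Cfun a b β := by
  have hab : 0 < a * β := mul_pos ha hβ
  set c : ℝ := δ * (a * β) with hc_def
  have hc : 0 < c := mul_pos hδ hab
  set h : ℝ → ℝ := fun y => b (a * β * y) / (1 - y) with hh_def
  set I : ℝ → ℝ := fun x => ∫ y in (0:ℝ)..x, h y with hI_def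
  set f : ℝ → ℝ := fun x => (1 - x)⁻¹ * Real.exp (-I x) with hf_def
  set g : ℝ → ℝ := fun x => (1 - x) ^ (c - 1) with hg_def
  have hb_nonneg : ∀ x : ℝ, 0 ≤ x → 0 ≤ b x := by
    intro x hx
    rcases eq_or_lt_of_le hx with rfl | hx'
    · exact hb0
    · exact (hb_pos x hx').le
  -- interval integrability of h on [u,v] with v < 1
  have hcont_h : ∀ u v : ℝ, u ≤ v → v < 1 → ContinuousOn h (Set.Icc u v) := by
    intro u v huv hv
    apply ContinuousOn.div
    · exact (hb_cont.comp (continuous_const.mul continuous_id)).continuousOn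
    · exact (continuous_const.sub continuous_id').continuousOn
    · intro y hy
      have : y ≤ v := hy.2
      intro h0
      have : (1:ℝ) - y > 0 := by linarith
      linarith
  have hint_h : ∀ u v : ℝ, u ≤ v → v < 1 → IntervalIntegrable h volume u v := by
    intro u v huv hv
    apply ContinuousOn.intervalIntegrable
    rw [Set.uIcc_of_le huv]
    exact hcont_h u v huv hv
  -- I x ≤ c * (-(log (1-x))) on [0,1)
  have hIle : ∀ x ∈ Set.Ico (0:ℝ) 1, I x ≤ c * (-Real.log (1 - x)) := by
    intro x hx
    have hx0 := hx.1
    have hx1 := hx.2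
    have h2 : IntervalIntegrable (fun y : ℝ => c * (1 - y)⁻¹) volume 0 x := by
      apply ContinuousOn.intervalIntegrable
      apply ContinuousOn.mul continuousOn_const
      apply ContinuousOn.inv₀ (continuous_const.sub continuous_id').continuousOn
      intro y hy
      rw [Set.uIcc_of_le hx0] at hy
      have : y ≤ x := hy.2
      intro h0; have h0' : (1:ℝ) - y = 0 := h0; linarith
    have hmono : ∀ y ∈ Set.Icc (0:ℝ) x, h y ≤ c * (1 - y)⁻¹ := by
      intro y hy
      have hy0 := hy.1
      have hyx := hy.2
      have h1y : 0 < 1 - y := by linarith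
      have hbd : b (a * β * y) ≤ c := by
        have h1 : b (a * β * y) ≤ δ * (a * β * y) := by
          apply hdom
          constructor
          · positivity
          · nlinarith
        have h2 : δ * (a * β * y) ≤ δ * (a * β) := by nlinarith
        linarith [h1, h2]
      have : h y = b (a * β * y) * (1 - y)⁻¹ := by
        simp [hh_def, div_eq_mul_inv]
      rw [this]
      exact mul_le_mul_of_nonneg_right hbd (le_of_lt (inv_pos.2 h1y))
    have hle := intervalIntegral.integral_mono_on hx0 (hint_h 0 x hx0 hx1) h2 hmono
    have hval : ∫ y in (0:ℝ)..x, c * (1 - y)⁻¹ = c * (-Real.log (1 - x)) := by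
      rw [intervalIntegral.integral_const_mul, integral_inv_one_sub one_pos hx1]
      simp
    rw [← hval]
    exact hle
  -- pointwise lower bound  g ≤ f on [0,1)
  have hfg : ∀ x ∈ Set.Ico (0:ℝ) 1, g x ≤ f x := by
    intro x hx
    have h1x : 0 < 1 - x := by linarith [hx.2]
    have hgx : g x = (1 - x)⁻¹ * Real.exp (c * Real.log (1 - x)) := by
      rw [hg_def]
      show (1 - x) ^ (c - 1) = (1 - x)⁻¹ * Real.exp (c * Real.log (1 - x))
      rw [show c - 1 = -1 + c by ring, Real.rpow_add h1x, Real.rpow_neg_one,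
        Real.rpow_def_of_pos h1x, mul_comm (Real.log (1 - x)) c]
    rw [hgx]
    apply mul_le_mul_of_nonneg_left _ (le_of_lt (inv_pos.2 h1x))
    apply Real.exp_le_exp.2
    have := hIle x hx
    linarith
  -- nonnegativity of I on [0,1]
  have hI_nonneg : ∀ x ∈ Set.Icc (0:ℝ) 1, 0 ≤ I x := by
    intro x hx
    apply intervalIntegral.integral_nonneg hx.1
    intro y hy
    rcases eq_or_lt_of_le (hy.2.trans hx.2 : y ≤ 1) with h1 | h1
    · subst h1; simp [hh_def]
    · exact div_nonneg (hb_nonneg _ (mul_nonneg hab.le hy.1)) (by linarith)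
  have hf_nonneg : ∀ x ∈ Set.Icc (0:ℝ) 1, 0 ≤ f x := by
    intro x hx
    apply mul_nonneg _ (Real.exp_pos _).le
    have : 0 ≤ 1 - x := by linarith [hx.2]
    positivity
  -- the dominating exponent m
  set m : ℝ := min (b (a * β / 2)) (1 / 2) with hm_def
  have hm0 : 0 < m := lt_min (hb_pos _ (by positivity)) (by norm_num)
  have hm1 : m ≤ 1 / 2 := min_le_right _ _
  set M : ℝ := (2:ℝ) ^ m * 2 with hM_def
  have h2m : (1:ℝ) ≤ (2:ℝ) ^ m := Real.one_le_rpow (by norm_num) hm0.le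
  have hM2 : (2:ℝ) ≤ M := by nlinarith
  -- domination: f x ≤ M * (1-x)^(m-1) on [0,1)
  have hdomf : ∀ x ∈ Set.Ico (0:ℝ) 1, f x ≤ M * (1 - x) ^ (m - 1) := by
    intro x hx
    have hx0 := hx.1
    have hx1 := hx.2
    have h1x : 0 < 1 - x := by linarith
    rcases le_or_gt x (1 / 2) with hhalf | hhalf
    · -- x ≤ 1/2 : f x ≤ 2 ≤ M ≤ M * (1-x)^(m-1)
      have hfx : f x ≤ 2 := by
        have hIx : 0 ≤ I x := hI_nonneg x ⟨hx0, hx1.le⟩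
        have he : Real.exp (-I x) ≤ 1 := Real.exp_le_one_iff.2 (by linarith)
        have hinv : (1 - x)⁻¹ ≤ 2 := by
          rw [inv_le_comm₀ h1x (by norm_num)]
          linarith
        calc f x = (1 - x)⁻¹ * Real.exp (-I x) := rfl
          _ ≤ (1 - x)⁻¹ * 1 := mul_le_mul_of_nonneg_left he (by positivity)
          _ ≤ 2 := by rw [mul_one]; exact hinv
      have hr : (1:ℝ) ≤ (1 - x) ^ (m - 1) :=
        Real.one_le_rpow_of_pos_of_le_one_of_nonpos h1x (by linarith) (by linarith)
      nlinarith
    · -- 1/2 < x < 1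
      have hhalf1 : (1:ℝ) / 2 < 1 := by norm_num
      have hsplit : I x = (∫ y in (0:ℝ)..(1/2), h y) + ∫ y in (1/2:ℝ)..x, h y := by
        rw [hI_def]
        exact (intervalIntegral.integral_add_adjacent_intervals
          (hint_h 0 (1/2) (by norm_num) hhalf1) (hint_h (1/2) x hhalf.le hx1)).symm
      have h1 : 0 ≤ ∫ y in (0:ℝ)..(1/2), h y := hI_nonneg (1/2) (by norm_num)
      have h2 : m * (Real.log (1 - 1/2) - Real.log (1 - x)) ≤ ∫ y in (1/2:ℝ)..x, h y := by
        have hint2 : IntervalIntegrable (fun y : ℝ => m * (1 - y)⁻¹) volume (1/2) x := by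
          apply ContinuousOn.intervalIntegrable
          apply ContinuousOn.mul continuousOn_const
          apply ContinuousOn.inv₀ (continuous_const.sub continuous_id').continuousOn
          intro y hy
          rw [Set.uIcc_of_le hhalf.le] at hy
          intro h0; have h0' : (1:ℝ) - y = 0 := h0; linarith [hy.2]
        have hmono : ∀ y ∈ Set.Icc (1/2:ℝ) x, m * (1 - y)⁻¹ ≤ h y := by
          intro y hy
          have h1y : 0 < 1 - y := by linarith [hy.2]
          have hby : m ≤ b (a * β * y) := by
            refine le_trans (min_le_left _ _) ?_
            apply hb_mono (Set.mem_Ici.2 (by positivity)) (Set.mem_Ici.2 (mul_nonneg hab.le (by linarith [hy.1])))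
            nlinarith [hy.1]
          have : h y = b (a * β * y) * (1 - y)⁻¹ := by
            simp [hh_def, div_eq_mul_inv]
          rw [this]
          exact mul_le_mul_of_nonneg_right hby (by positivity)
        have := intervalIntegral.integral_mono_on hhalf.le hint2
          (hint_h (1/2) x hhalf.le hx1) hmono
        rwa [intervalIntegral.integral_const_mul, integral_inv_one_sub hhalf1 hx1] at this
      have hlog : Real.log (1 - 1/2 : ℝ) = -Real.log 2 := by
        norm_num
        rw [← Real.log_inv]
        norm_num
      have hIlow : m * (-Real.log 2 - Real.log (1 - x)) ≤ I x := by
        rw [hsplit, ← hlog]; linarith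
      have hexp : Real.exp (-I x) ≤ (2:ℝ) ^ m * (1 - x) ^ m := by
        have : Real.exp (-I x) ≤ Real.exp (m * Real.log 2 + m * Real.log (1 - x)) := by
          apply Real.exp_le_exp.2
          nlinarith [hIlow]
        rw [Real.exp_add] at this
        rw [Real.rpow_def_of_pos (by norm_num : (0:ℝ) < 2),
          Real.rpow_def_of_pos h1x, mul_comm (Real.log 2) m, mul_comm (Real.log (1 - x)) m]
        exact this
      have hfin : f x ≤ (2:ℝ) ^ m * (1 - x) ^ (m - 1) := by
        have : f x ≤ (1 - x)⁻¹ * ((2:ℝ) ^ m * (1 - x) ^ m) :=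
          mul_le_mul_of_nonneg_left hexp (by positivity)
        calc f x ≤ (1 - x)⁻¹ * ((2:ℝ) ^ m * (1 - x) ^ m) := this
          _ = (2:ℝ) ^ m * ((1 - x) ^ m * (1 - x)⁻¹) := by ring
          _ = (2:ℝ) ^ m * (1 - x) ^ (m - 1) := by
              rw [show m - 1 = m + (-1) by ring, Real.rpow_add h1x, Real.rpow_neg_one]
      have hrp : (0:ℝ) ≤ (1 - x) ^ (m - 1) := Real.rpow_nonneg h1x.le _
      nlinarith [hfin, hrp, h2m]
  -- continuity of I on [0,1)
  have hIcont : ContinuousOn I (Set.Ico 0 1) := by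
    intro x₀ hx₀
    set t : ℝ := (1 + x₀) / 2 with ht_def
    have hx₀t : x₀ < t := by simp only [ht_def]; linarith [hx₀.2]
    have ht1 : t < 1 := by simp only [ht_def]; linarith [hx₀.2]
    have ht0 : (0:ℝ) ≤ t := by simp only [ht_def]; linarith [hx₀.1]
    have hIc : ContinuousOn I (Set.uIcc 0 t) := by
      apply intervalIntegral.continuousOn_primitive_interval
      rw [Set.uIcc_of_le ht0]
      exact (hcont_h 0 t ht0 ht1).integrableOn_Icc
    have hmem : x₀ ∈ Set.uIcc 0 t := by
      rw [Set.uIcc_of_le ht0]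
      exact ⟨hx₀.1, hx₀t.le⟩
    refine ContinuousWithinAt.mono_of_mem_nhdsWithin (hIc x₀ hmem) ?_
    rw [Set.uIcc_of_le ht0]
    rw [mem_nhdsWithin_iff_exists_mem_nhds_inter]
    exact ⟨Set.Iio t, Iio_mem_nhds hx₀t, fun y hy => ⟨hy.2.1, hy.1.le⟩⟩
  have hfcont : ContinuousOn f (Set.Ico 0 1) := by
    apply ContinuousOn.mul
    · apply ContinuousOn.inv₀ (continuous_const.sub continuous_id').continuousOn
      intro x hx
      intro h0; have h0' : (1:ℝ) - x = 0 := h0; linarith [hx.2]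
    · exact Real.continuous_exp.comp_continuousOn hIcont.neg
  -- a.e. measurability of f on (0,1]
  have hmeas : AEStronglyMeasurable f (volume.restrict (Set.Ioc 0 1)) := by
    rw [← Measure.restrict_congr_set Ioo_ae_eq_Ioc]
    exact (hfcont.mono (fun y hy => ⟨hy.1.le, hy.2⟩)).aestronglyMeasurable measurableSet_Ioo
  have hae_ne_one : ∀ᵐ x : ℝ, x ≠ 1 := by
    have := Set.Countable.ae_notMem (Set.countable_singleton (1:ℝ)) (μ := volume)
    simpa using this
  -- integrability of f on [0,1]
  have hGint : IntervalIntegrable (fun x : ℝ => M * (1 - x) ^ (m - 1)) volume 0 1 :=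
    (intervalIntegrable_one_sub_rpow (by linarith)).const_mul M
  have hfint : IntervalIntegrable f volume 0 1 := by
    rw [intervalIntegrable_iff_integrableOn_Ioc_of_le zero_le_one]
    have hGint' : IntegrableOn (fun x : ℝ => M * (1 - x) ^ (m - 1)) (Set.Ioc 0 1) := by
      rw [← intervalIntegrable_iff_integrableOn_Ioc_of_le zero_le_one]
      exact hGint
    refine Integrable.mono' hGint' hmeas ?_
    refine (ae_restrict_iff' measurableSet_Ioc).2 ?_
    filter_upwards [hae_ne_one] with x hx1 hx
    have hxI : x ∈ Set.Ico (0:ℝ) 1 := ⟨hx.1.le, lt_of_le_of_ne hx.2 hx1⟩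
    rw [Real.norm_eq_abs, abs_of_nonneg (hf_nonneg x ⟨hxI.1, hxI.2.le⟩)]
    exact hdomf x hxI
  have hgint : IntervalIntegrable g volume 0 1 :=
    intervalIntegrable_one_sub_rpow (by linarith)
  -- main comparison
  have hmain : (∫ x in (0:ℝ)..1, g x) ≤ ∫ x in (0:ℝ)..1, f x := by
    apply intervalIntegral.integral_mono_ae_restrict zero_le_one hgint hfint
    refine (ae_restrict_iff' measurableSet_Icc).2 ?_
    filter_upwards [hae_ne_one] with x hx1 hx
    exact hfg x ⟨hx.1, lt_of_le_of_ne hx.2 hx1⟩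
  have hgval : (∫ x in (0:ℝ)..1, g x) = 1 / c := by
    have := integral_one_sub_rpow (r := c - 1) (by linarith)
    simpa [hg_def, sub_add_cancel] using this
  have hCval : Cfun a b β = ∫ x in (0:ℝ)..1, f x := by
    rfl
  have hCge : 1 / c ≤ Cfun a b β := by
    rw [hCval, ← hgval]
    exact hmain
  have : 1 / (δ * a) = β * (1 / c) := by
    field_simp [hc_def]
    ring
  rw [this]
  exact mul_le_mul_of_nonneg_left hCge hβ.le
end

section
/- Suppose that b(x)/x → 0 as x → 0⁺ and that there exists β₀ > 0 with β₀·C(β₀) < 1. Then there exists β > 0 satisfying the fixed point equation β·C(β) = 1. -/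
open MeasureTheory Real Filter Set

section Aux

variable {a : ℝ} {b : ℝ → ℝ}

private lemma bnn (hb_mono : MonotoneOn b (Set.Ici 0)) (hb0 : 0 ≤ b 0) {t : ℝ} (ht : 0 ≤ t) :
    0 ≤ b t :=
  hb0.trans (hb_mono self_mem_Ici ht ht)

private lemma int_inv {t x : ℝ} (ht : t < 1) (hx : x < 1) :
    ∫ y in t..x, (1 - y)⁻¹ = Real.log ((1 - t) / (1 - x)) := by
  have h := intervalIntegral.integral_comp_sub_left (a := t) (b := x) (fun u => u⁻¹) 1
  rw [h, integral_inv]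
  rw [Set.mem_uIcc]
  push_neg
  constructor <;> intro h' <;> nlinarith

private lemma g_intble (hb_cont : Continuous b) (β : ℝ) {t x : ℝ}
    (h : Set.uIcc t x ⊆ Set.Iio 1) :
    IntervalIntegrable (fun y => b (a * β * y) / (1 - y)) volume t x := by
  apply ContinuousOn.intervalIntegrable
  apply ContinuousOn.div
  · exact (hb_cont.comp (continuous_const.mul continuous_id)).continuousOn
  · exact (continuous_const.sub continuous_id).continuousOn
  · intro y hy
    have := h hy
    simp only [Set.mem_Iio] at this
    intro hc; nlinarith

private lemma uIcc_subset_Iio {t x : ℝ} (ht : t < 1) (hx : x < 1) :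
    Set.uIcc t x ⊆ Set.Iio 1 := by
  intro y hy
  rw [Set.mem_uIcc] at hy
  rw [Set.mem_Iio]
  rcases hy with h | h
  · exact lt_of_le_of_lt h.2 hx
  · exact lt_of_le_of_lt h.2 ht

private lemma I_nonneg (hb_mono : MonotoneOn b (Set.Ici 0)) (hb0 : 0 ≤ b 0)
    (ha : 0 ≤ a) {β x : ℝ} (hβ : 0 ≤ β) (hx0 : 0 ≤ x) (hx1 : x < 1) :
    0 ≤ ∫ y in (0:ℝ)..x, b (a * β * y) / (1 - y) := by
  apply intervalIntegral.integral_nonneg hx0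
  intro y hy
  exact div_nonneg (bnn hb_mono hb0 (by have := hy.1; positivity)) (by have := hy.2; linarith)

private lemma I_le (hb_cont : Continuous b) (hb_mono : MonotoneOn b (Set.Ici 0))
    (ha : 0 ≤ a) {β x : ℝ} (hβ : 0 ≤ β) (hx0 : 0 ≤ x) (hx1 : x < 1) :
    ∫ y in (0:ℝ)..x, b (a * β * y) / (1 - y) ≤ b (a * β) * (-Real.log (1 - x)) := by
  have h2 : ∫ y in (0:ℝ)..x, b (a * β) * (1 - y)⁻¹ = b (a * β) * (-Real.log (1 - x)) := by
    rw [intervalIntegral.integral_const_mul, int_inv one_pos hx1]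
    congr 1
    rw [sub_zero, Real.log_div one_ne_zero (by linarith), Real.log_one, zero_sub]
  rw [← h2]
  apply intervalIntegral.integral_mono_on hx0 (g_intble hb_cont β (uIcc_subset_Iio one_pos hx1))
  · exact (ContinuousOn.intervalIntegrable (by
      apply ContinuousOn.mul continuousOn_const
      apply ContinuousOn.inv₀ (continuous_const.sub continuous_id).continuousOn
      intro y hy
      have := (uIcc_subset_Iio one_pos hx1) hy
      simp only [Set.mem_Iio] at this
      simp only [id_eq, Pi.sub_apply]
      intro hc; nlinarith))
  · intro y hy
    rw [div_eq_mul_inv]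
    apply mul_le_mul_of_nonneg_right _ (by rw [inv_nonneg]; linarith [hy.2])
    apply hb_mono (by have := hy.1; simp only [Set.mem_Ici]; positivity)
      (by simp only [Set.mem_Ici]; positivity)
    have h1 : a * β * y ≤ a * β * 1 := by
      apply mul_le_mul_of_nonneg_left _ (mul_nonneg ha hβ)
      linarith [hy.2]
    linarith

private lemma exp_lower (hb_cont : Continuous b) (hb_mono : MonotoneOn b (Set.Ici 0))
    (ha : 0 ≤ a) {β x : ℝ} (hβ : 0 ≤ β) (hx0 : 0 ≤ x) (hx1 : x < 1) :
    (1 - x) ^ (b (a * β)) ≤ Real.exp (-∫ y in (0:ℝ)..x, b (a * β * y) / (1 - y)) := by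
  rw [Real.rpow_def_of_pos (by linarith)]
  apply Real.exp_le_exp.mpr
  have := I_le hb_cont hb_mono ha hβ hx0 hx1
  nlinarith [this]

private lemma exp_upper (hb_cont : Continuous b) (hb_mono : MonotoneOn b (Set.Ici 0))
    (hb0 : 0 ≤ b 0) (ha : 0 < a) {β₁ β x : ℝ} (hβ₁ : 0 < β₁) (hβ : β₁ ≤ β)
    (hx : 1/2 ≤ x) (hx1 : x < 1) :
    Real.exp (-∫ y in (0:ℝ)..x, b (a * β * y) / (1 - y)) ≤
      (2:ℝ) ^ (b (a * β₁ / 2)) * (1 - x) ^ (b (a * β₁ / 2)) := by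
  set c := b (a * β₁ / 2) with hc
  have hβ0 : 0 < β := lt_of_lt_of_le hβ₁ hβ
  have hcnn : 0 ≤ c := bnn hb_mono hb0 (by positivity)
  have hsplit : ∫ y in (0:ℝ)..x, b (a * β * y) / (1 - y)
      = (∫ y in (0:ℝ)..(1/2), b (a * β * y) / (1 - y))
        + ∫ y in (1/2:ℝ)..x, b (a * β * y) / (1 - y) :=
    (intervalIntegral.integral_add_adjacent_intervals
      (g_intble hb_cont β (uIcc_subset_Iio one_pos (by norm_num)))
      (g_intble hb_cont β (uIcc_subset_Iio (by norm_num) hx1))).symm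
  have h1 : 0 ≤ ∫ y in (0:ℝ)..(1/2), b (a * β * y) / (1 - y) := by
    apply intervalIntegral.integral_nonneg (by norm_num)
    intro y hy
    exact div_nonneg (bnn hb_mono hb0 (by have := hy.1; positivity)) (by have := hy.2; linarith)
  have h2 : c * Real.log ((1 - 1/2) / (1 - x)) ≤ ∫ y in (1/2:ℝ)..x, b (a * β * y) / (1 - y) := by
    rw [← int_inv (by norm_num) hx1, ← intervalIntegral.integral_const_mul]
    apply intervalIntegral.integral_mono_on hx
    · exact (ContinuousOn.intervalIntegrable (by
        apply ContinuousOn.mul continuousOn_const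
        apply ContinuousOn.inv₀ (continuous_const.sub continuous_id).continuousOn
        intro y hy
        have := (uIcc_subset_Iio (by norm_num) hx1) hy
        simp only [Set.mem_Iio] at this
        simp only [id_eq, Pi.sub_apply]
        intro hcon; nlinarith))
    · exact g_intble hb_cont β (uIcc_subset_Iio (by norm_num) hx1)
    · intro y hy
      rw [div_eq_mul_inv]
      apply mul_le_mul_of_nonneg_right _ (by rw [inv_nonneg]; linarith [hy.2])
      apply hb_mono (by simp only [Set.mem_Ici]; positivity)
        (by have h01 := hy.1; simp only [Set.mem_Ici]; nlinarith [mul_pos ha hβ0])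
      nlinarith [hy.1, mul_pos ha hβ0, mul_pos ha hβ₁]
  have hlog : Real.log ((1 - 1/2) / (1 - x)) = -Real.log 2 - Real.log (1 - x) := by
    rw [Real.log_div (by norm_num) (by linarith)]
    norm_num
    rw [Real.log_div one_ne_zero (by norm_num), Real.log_one]
    ring
  calc Real.exp (-∫ y in (0:ℝ)..x, b (a * β * y) / (1 - y))
      ≤ Real.exp (c * Real.log 2 + c * Real.log (1 - x)) := by
        apply Real.exp_le_exp.mpr
        rw [hsplit]
        rw [hlog] at h2
        nlinarith [h1, h2]
    _ = (2:ℝ) ^ c * (1 - x) ^ c := by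
        rw [Real.exp_add, Real.rpow_def_of_pos (by norm_num : (0:ℝ) < 2),
          Real.rpow_def_of_pos (by linarith : (0:ℝ) < 1 - x)]
        ring_nf

private lemma F_bound (hb_cont : Continuous b) (hb_mono : MonotoneOn b (Set.Ici 0))
    (hb0 : 0 ≤ b 0) (ha : 0 < a) {β₁ β x : ℝ} (hβ₁ : 0 < β₁) (hβ : β₁ ≤ β)
    (hx : x ∈ Set.Ioc (0:ℝ) 1) :
    ‖(1 - x)⁻¹ * Real.exp (-∫ y in (0:ℝ)..x, b (a * β * y) / (1 - y))‖ ≤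
      (2:ℝ) ^ (b (a * β₁ / 2)) * (1 - x) ^ (b (a * β₁ / 2) - 1) := by
  set c := b (a * β₁ / 2) with hc
  have hβ0 : 0 < β := lt_of_lt_of_le hβ₁ hβ
  have hcnn : 0 ≤ c := bnn hb_mono hb0 (by positivity)
  rcases eq_or_lt_of_le hx.2 with h1 | hx1
  · rw [h1]
    simp only [sub_self, inv_zero, zero_mul, norm_zero]
    positivity
  have hFnn : 0 ≤ (1 - x)⁻¹ * Real.exp (-∫ y in (0:ℝ)..x, b (a * β * y) / (1 - y)) := by
    apply mul_nonneg (by rw [inv_nonneg]; linarith) (Real.exp_nonneg _)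
  rw [Real.norm_eq_abs, abs_of_nonneg hFnn]
  have hre : (2:ℝ) ^ c * (1 - x) ^ (c - 1) = (1 - x)⁻¹ * ((2:ℝ) ^ c * (1 - x) ^ c) := by
    rw [Real.rpow_sub (by linarith), Real.rpow_one]
    field_simp
  rcases le_or_gt x (1/2) with hhalf | hhalf
  · have hexp : Real.exp (-∫ y in (0:ℝ)..x, b (a * β * y) / (1 - y)) ≤ 1 := by
      rw [Real.exp_le_one_iff, neg_nonpos]
      exact I_nonneg hb_mono hb0 ha.le hβ0.le hx.1.le hx1
    have hone : 1 ≤ (2:ℝ) ^ c * (1 - x) ^ c := by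
      rw [← Real.mul_rpow (by norm_num) (by linarith)]
      calc (1:ℝ) = 1 ^ c := (Real.one_rpow c).symm
        _ ≤ (2 * (1 - x)) ^ c := Real.rpow_le_rpow (by norm_num) (by linarith) hcnn
    rw [hre]
    apply mul_le_mul_of_nonneg_left _ (by rw [inv_nonneg]; linarith)
    exact hexp.trans hone
  · rw [hre]
    apply mul_le_mul_of_nonneg_left _ (by rw [inv_nonneg]; linarith)
    exact exp_upper hb_cont hb_mono hb0 ha hβ₁ hβ (by linarith) hx1

private lemma G_int {c : ℝ} (hc : 0 < c) :
    IntegrableOn (fun x : ℝ => (2:ℝ) ^ c * (1 - x) ^ (c - 1)) (Set.Ioc 0 1) := by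
  have h : IntervalIntegrable (fun x : ℝ => (1 - x) ^ (c - 1)) volume 0 1 := by
    have h0 := (intervalIntegral.intervalIntegrable_rpow' (a := 0) (b := 1) (r := c - 1)
      (by linarith)).comp_sub_left 1
    norm_num at h0
    exact h0.symm
  have h2 := h.const_mul ((2:ℝ) ^ c)
  rwa [intervalIntegrable_iff_integrableOn_Ioc_of_le zero_le_one] at h2

private lemma I_contx (hb_cont : Continuous b) (β : ℝ) :
    ContinuousOn (fun x => ∫ y in (0:ℝ)..x, b (a * β * y) / (1 - y)) (Set.Ioo 0 1) := by
  intro x hx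
  apply ContinuousAt.continuousWithinAt
  set t := (x + 1) / 2 with hts
  have hxt : x < t := by simp only [hts]; linarith [hx.2]
  have ht1 : t < 1 := by simp only [hts]; linarith [hx.2]
  have hcont := intervalIntegral.continuousOn_primitive_interval
    (a := 0) (b := t) (μ := volume) (f := fun y => b (a * β * y) / (1 - y)) ?_
  · apply hcont.continuousAt
    rw [Set.uIcc_of_le (by linarith [hx.1] : (0:ℝ) ≤ t)]
    exact Icc_mem_nhds hx.1 hxt
  · rw [Set.uIcc_of_le (by linarith [hx.1] : (0:ℝ) ≤ t)]
    apply ContinuousOn.integrableOn_Icc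
    apply ContinuousOn.div
    · exact (hb_cont.comp (continuous_const.mul continuous_id)).continuousOn
    · exact (continuous_const.sub continuous_id).continuousOn
    · intro y hy
      have : y ≤ t := hy.2
      intro hcon; nlinarith

private lemma F_meas (hb_cont : Continuous b) (β : ℝ) :
    AEStronglyMeasurable
      (fun x => (1 - x)⁻¹ * Real.exp (-∫ y in (0:ℝ)..x, b (a * β * y) / (1 - y)))
      (volume.restrict (Set.Ioc (0:ℝ) 1)) := by
  rw [← Measure.restrict_congr_set (Ioo_ae_eq_Ioc (a := (0:ℝ)) (b := 1))]
  apply ContinuousOn.aestronglyMeasurable _ measurableSet_Ioo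
  apply ContinuousOn.mul
  · apply ContinuousOn.inv₀ (continuous_const.sub continuous_id).continuousOn
    intro x hx
    simp only [id_eq, Pi.sub_apply]
    intro hcon; nlinarith [hx.2]
  · exact Real.continuous_exp.comp_continuousOn ((I_contx hb_cont β).neg)

private lemma F_int (hb_cont : Continuous b) (hb_mono : MonotoneOn b (Set.Ici 0))
    (hb0 : 0 ≤ b 0) (ha : 0 < a) (hb_pos : ∀ x > (0:ℝ), 0 < b x) {β : ℝ} (hβ : 0 < β) :
    IntegrableOn
      (fun x => (1 - x)⁻¹ * Real.exp (-∫ y in (0:ℝ)..x, b (a * β * y) / (1 - y)))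
      (Set.Ioc (0:ℝ) 1) := by
  have hc : 0 < b (a * β / 2) := hb_pos _ (by positivity)
  apply Integrable.mono (G_int hc) (F_meas hb_cont β)
  rw [ae_restrict_iff' measurableSet_Ioc]
  apply ae_of_all
  intro x hx
  have hb := F_bound hb_cont hb_mono hb0 ha hβ le_rfl hx
  have hGnn : 0 ≤ (2:ℝ) ^ (b (a * β / 2)) * (1 - x) ^ (b (a * β / 2) - 1) :=
    mul_nonneg (Real.rpow_nonneg (by norm_num) _) (Real.rpow_nonneg (by linarith [hx.2]) _)
  rw [Real.norm_eq_abs (((2:ℝ) ^ _) * _), abs_of_nonneg hGnn]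
  exact hb

private lemma C_lower (hb_cont : Continuous b) (hb_mono : MonotoneOn b (Set.Ici 0))
    (hb0 : 0 ≤ b 0) (ha : 0 < a) (hb_pos : ∀ x > (0:ℝ), 0 < b x) {β : ℝ} (hβ : 0 < β) :
    1 / b (a * β) ≤ Cfun a b β := by
  set ε := b (a * β) with hε
  have hεpos : 0 < ε := hb_pos _ (by positivity)
  have hlow_ii : IntervalIntegrable (fun x : ℝ => (1 - x) ^ (ε - 1)) volume 0 1 := by
    have h0 := (intervalIntegral.intervalIntegrable_rpow' (a := 0) (b := 1) (r := ε - 1)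
      (by linarith)).comp_sub_left 1
    norm_num at h0
    exact h0.symm
  have hint : ∫ x in (0:ℝ)..1, (1 - x) ^ (ε - 1) = 1 / ε := by
    rw [intervalIntegral.integral_comp_sub_left (fun u : ℝ => u ^ (ε - 1)) 1]
    norm_num
    rw [integral_rpow (Or.inl (by linarith : (-1:ℝ) < ε - 1))]
    have h1 : ε - 1 + 1 = ε := by ring
    rw [h1, Real.one_rpow, Real.zero_rpow hεpos.ne']
    norm_num
  have heq1 : Cfun a b β
      = ∫ x in Set.Ioo (0:ℝ) 1,
          (1 - x)⁻¹ * Real.exp (-∫ y in (0:ℝ)..x, b (a * β * y) / (1 - y)) := by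
    rw [Cfun, intervalIntegral.integral_of_le zero_le_one]
    exact (setIntegral_congr_set (Ioo_ae_eq_Ioc)).symm
  have heq2 : (1:ℝ) / ε = ∫ x in Set.Ioo (0:ℝ) 1, (1 - x) ^ (ε - 1) := by
    rw [← hint, intervalIntegral.integral_of_le zero_le_one]
    exact (setIntegral_congr_set (Ioo_ae_eq_Ioc)).symm
  rw [heq1, heq2]
  apply setIntegral_mono_on
  · rw [intervalIntegrable_iff_integrableOn_Ioc_of_le zero_le_one] at hlow_ii
    exact hlow_ii.mono_set Set.Ioo_subset_Ioc_self
  · exact (F_int hb_cont hb_mono hb0 ha hb_pos hβ).mono_set Set.Ioo_subset_Ioc_self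
  · exact measurableSet_Ioo
  · intro x hx
    have h1x : 0 < 1 - x := by linarith [hx.2]
    have hre : (1 - x) ^ (ε - 1) = (1 - x)⁻¹ * (1 - x) ^ ε := by
      rw [Real.rpow_sub h1x, Real.rpow_one]
      field_simp
    rw [hre]
    exact mul_le_mul_of_nonneg_left
      (exp_lower hb_cont hb_mono ha.le hβ.le hx.1.le hx.2) (by positivity)

private lemma I_contβ (hb_cont : Continuous b) (hb_mono : MonotoneOn b (Set.Ici 0))
    (hb0 : 0 ≤ b 0) (ha : 0 < a) {x β' : ℝ} (hx0 : 0 < x) (hx1 : x < 1) (hβ' : 0 < β') :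
    ContinuousAt (fun β => ∫ y in (0:ℝ)..x, b (a * β * y) / (1 - y)) β' := by
  have heq : (fun β => ∫ y in (0:ℝ)..x, b (a * β * y) / (1 - y))
      = fun β => ∫ y in Set.Ioc (0:ℝ) x, b (a * β * y) / (1 - y) := by
    funext β; rw [intervalIntegral.integral_of_le hx0.le]
  rw [heq]
  apply MeasureTheory.continuousAt_of_dominated
    (bound := fun _ => b (a * (β' + 1)) * (1 - x)⁻¹)
  · apply Filter.Eventually.of_forall
    intro β
    exact (((hb_cont.measurable.comp (measurable_const.mul measurable_id)).div
      (measurable_const.sub measurable_id)).aestronglyMeasurable)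
  · apply Filter.eventually_of_mem (Icc_mem_nhds hβ' (lt_add_one β'))
    intro β hβ
    rw [ae_restrict_iff' measurableSet_Ioc]
    apply ae_of_all
    intro y hy
    have h1y : 0 < 1 - y := by linarith [hy.2]
    have hyx : 0 < 1 - x := by linarith
    have hbnn : 0 ≤ b (a * β * y) := bnn hb_mono hb0
      (by have := hy.1; have := hβ.1; positivity)
    rw [Real.norm_eq_abs, abs_div, abs_of_nonneg hbnn, abs_of_pos h1y, div_eq_mul_inv]
    apply mul_le_mul
    · apply hb_mono (Set.mem_Ici.mpr (by have := hy.1; have := hβ.1; positivity))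
        (Set.mem_Ici.mpr (by positivity))
      have h1 : a * β * y ≤ a * β * 1 := by
        apply mul_le_mul_of_nonneg_left (by linarith [hy.2]) (mul_nonneg ha.le hβ.1)
      have h2 : a * β ≤ a * (β' + 1) := mul_le_mul_of_nonneg_left hβ.2 ha.le
      linarith
    · exact inv_anti₀ hyx (by linarith [hy.2])
    · positivity
    · exact bnn hb_mono hb0 (by positivity)
  · exact integrableOn_const measure_Ioc_lt_top.ne
  · apply ae_of_all
    intro y
    exact ((hb_cont.comp (by continuity : Continuous fun β : ℝ => a * β * y)).div_const
      _).continuousAt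

private lemma C_cont (hb_cont : Continuous b) (hb_mono : MonotoneOn b (Set.Ici 0))
    (hb0 : 0 ≤ b 0) (ha : 0 < a) (hb_pos : ∀ x > (0:ℝ), 0 < b x) {β' : ℝ} (hβ' : 0 < β') :
    ContinuousAt (Cfun a b) β' := by
  have heq : Cfun a b = fun β => ∫ x in Set.Ioc (0:ℝ) 1,
      (1 - x)⁻¹ * Real.exp (-∫ y in (0:ℝ)..x, b (a * β * y) / (1 - y)) := by
    funext β; rw [Cfun, intervalIntegral.integral_of_le zero_le_one]
  rw [heq]
  set c := b (a * (β' / 2) / 2) with hcdef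
  have hc : 0 < c := hb_pos _ (by positivity)
  apply MeasureTheory.continuousAt_of_dominated
    (bound := fun x => (2:ℝ) ^ c * (1 - x) ^ (c - 1))
  · exact Filter.Eventually.of_forall fun β => F_meas hb_cont β
  · apply Filter.eventually_of_mem (Icc_mem_nhds (by linarith) (lt_add_one β') :
      Set.Icc (β' / 2) (β' + 1) ∈ nhds β')
    intro β hβ
    rw [ae_restrict_iff' measurableSet_Ioc]
    apply ae_of_all
    intro x hx
    exact F_bound hb_cont hb_mono hb0 ha (by linarith) hβ.1 hx
  · exact G_int hc
  · rw [ae_restrict_iff' measurableSet_Ioc]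
    apply ae_of_all
    intro x hx
    rcases eq_or_lt_of_le hx.2 with h1 | h1
    · have hfun : (fun β : ℝ => (1 - x)⁻¹ *
          Real.exp (-∫ y in (0:ℝ)..x, b (a * β * y) / (1 - y))) = fun _ => 0 := by
        funext β
        rw [← h1]
        simp
      rw [hfun]
      exact continuousAt_const
    · exact continuousAt_const.mul
        ((Real.continuous_exp.continuousAt).comp
          (I_contβ hb_cont hb_mono hb0 ha hx.1 h1 hβ').neg)

end Aux

/-- if `b(x)/x → 0` as `x → 0⁺` and `β₀ C(β₀) < 1` for some
`β₀ > 0`, then the fixed point equation `β C(β) = 1` has a solution `β > 0`. -/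
theorem exists_nontrivial_stationary_distribution_of_dip_below_one
    (a : ℝ) (ha : 0 < a) (b : ℝ → ℝ)
    (hb_cont : Continuous b) (hb_mono : MonotoneOn b (Set.Ici 0))
    (hb0 : 0 ≤ b 0) (hb_pos : ∀ x > (0:ℝ), 0 < b x)
    (hslope : Tendsto (fun x => b x / x) (nhdsWithin 0 (Set.Ioi 0)) (nhds 0))
    (hdip : ∃ β₀ : ℝ, 0 < β₀ ∧ β₀ * Cfun a b β₀ < 1) :
    ∃ β : ℝ, 0 < β ∧ β * Cfun a b β = 1 := by
  obtain ⟨β₀, hβ₀, hdip⟩ := hdip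
  have hev : ∀ᶠ x in nhdsWithin 0 (Set.Ioi 0), b x / x < 1 / (2 * a) :=
    hslope.eventually_lt_const (by positivity)
  rw [eventually_nhdsWithin_iff, Metric.eventually_nhds_iff] at hev
  obtain ⟨δ, hδ, hball⟩ := hev
  set βl := min β₀ (δ / a) / 2 with hβldef
  have hmin : 0 < min β₀ (δ / a) := lt_min hβ₀ (by positivity)
  have hβl : 0 < βl := by positivity
  have hβlβ₀ : βl < β₀ := by
    have h1 := min_le_left β₀ (δ / a)
    rw [hβldef]; linarith
  have haβl : a * βl < δ := by
    have h1 := min_le_right β₀ (δ / a)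
    have h2 : βl ≤ δ / a / 2 := by rw [hβldef]; linarith
    have h3 : a * βl ≤ a * (δ / a / 2) := mul_le_mul_of_nonneg_left h2 ha.le
    have h4 : a * (δ / a / 2) = δ / 2 := by field_simp
    linarith
  have haβl0 : 0 < a * βl := by positivity
  have hbb : b (a * βl) / (a * βl) < 1 / (2 * a) := by
    apply hball _ (Set.mem_Ioi.mpr haβl0)
    rw [Real.dist_eq, sub_zero, abs_of_pos haβl0]
    exact haβl
  have hbpos : 0 < b (a * βl) := hb_pos _ haβl0
  have hkey : 2 < βl / b (a * βl) := by
    rw [div_lt_div_iff₀ haβl0 (by positivity)] at hbb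
    rw [lt_div_iff₀ hbpos]
    nlinarith
  have hCl := C_lower hb_cont hb_mono hb0 ha hb_pos hβl
  have hfl : 1 < βl * Cfun a b βl := by
    have h1 : βl * (1 / b (a * βl)) ≤ βl * Cfun a b βl :=
      mul_le_mul_of_nonneg_left hCl hβl.le
    have h2 : βl * (1 / b (a * βl)) = βl / b (a * βl) := by field_simp
    linarith
  have hcont : ContinuousOn (fun β => β * Cfun a b β) (Set.Icc βl β₀) := by
    intro β hβ
    exact (continuousAt_id.mul
      (C_cont hb_cont hb_mono hb0 ha hb_pos (lt_of_lt_of_le hβl hβ.1))).continuousWithinAt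
  have h1mem : (1:ℝ) ∈ Set.Icc ((fun β => β * Cfun a b β) β₀) ((fun β => β * Cfun a b β) βl) :=
    ⟨hdip.le, hfl.le⟩
  obtain ⟨β, hβmem, hβeq⟩ := intermediate_value_Icc' hβlβ₀.le hcont h1mem
  exact ⟨β, lt_of_lt_of_le hβl hβmem.1, hβeq⟩
end

section
/- Let b(x) = λx + δ with λ > 0 and δ ≥ 0, and set ρ = λ·a. Then for every β > 0, C(β) = 1/(ρβ + δ) + (ρβ/(ρβ + δ))·∫₀¹ (1 − x)^{ρβ+δ} e^{ρβx} dx. -/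
open MeasureTheory Real Filter Set

/-- for the affine firing function `b(x) = λ x + δ` with `λ > 0`,
`δ ≥ 0` and `ρ = λ a`, one has
`C(β) = 1/(ρβ + δ) + (ρβ/(ρβ + δ)) ∫₀¹ (1-x)^{ρβ+δ} e^{ρβ x} dx` for every `β > 0`. -/
theorem Cfun_affine_formula
    (a lam δ : ℝ) (ha : 0 < a) (hlam : 0 < lam) (hδ : 0 ≤ δ)
    (β : ℝ) (hβ : 0 < β) :
    Cfun a (fun x => lam * x + δ) β =
      1 / (lam * a * β + δ) +
        (lam * a * β / (lam * a * β + δ)) *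
          ∫ x in (0:ℝ)..1, (1 - x) ^ (lam * a * β + δ) * Real.exp (lam * a * β * x) := by
  set ρ := lam * a * β with hρdef
  have hρ : 0 < ρ := by positivity
  set c := ρ + δ with hcdef
  have hc : 0 < c := by positivity
  -- Step 1: rewrite Cfun as ∫₀¹ (1-x)^(c-1) exp(ρ x)
  have key : Cfun a (fun x => lam * x + δ) β
      = ∫ x in (0:ℝ)..1, (1 - x) ^ (c - 1) * Real.exp (ρ * x) := by
    unfold Cfun
    apply intervalIntegral.integral_congr_ae
    have h1 : ∀ᵐ x : ℝ ∂volume, x ≠ 1 := by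
      simp only [ae_iff, not_ne_iff, Set.setOf_eq_eq_singleton]
      exact Real.volume_singleton
    filter_upwards [h1] with x hx hmem
    rw [Set.uIoc_of_le (by norm_num : (0:ℝ) ≤ 1)] at hmem
    have hx1 : x < 1 := lt_of_le_of_ne hmem.2 hx
    have hx0 : 0 < x := hmem.1
    have h1x : 0 < 1 - x := by linarith
    have hinner : (∫ y in (0:ℝ)..x, (lam * (a * β * y) + δ) / (1 - y))
        = -ρ * x - c * Real.log (1 - x) := by
      have hderiv : ∀ y ∈ Set.uIcc (0:ℝ) x,
          HasDerivAt (fun y => -ρ * y - c * Real.log (1 - y))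
            ((lam * (a * β * y) + δ) / (1 - y)) y := by
        intro y hy
        rw [Set.uIcc_of_le hx0.le] at hy
        have h1y : 0 < 1 - y := by
          have := hy.2; linarith
        have hlog : HasDerivAt (fun y : ℝ => Real.log (1 - y)) ((1 - y)⁻¹ * (-1)) y :=
          (Real.hasDerivAt_log h1y.ne').comp y ((hasDerivAt_id y).const_sub 1)
        have hlin : HasDerivAt (fun y : ℝ => -ρ * y) (-ρ * 1) y :=
          (hasDerivAt_id y).const_mul (-ρ)
        have := hlin.sub (hlog.const_mul c)
        refine this.congr_deriv ?_
        field_simp [h1y.ne']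
        rw [hcdef, hρdef]
        ring
      have hcont : ContinuousOn (fun y : ℝ => (lam * (a * β * y) + δ) / (1 - y))
          (Set.uIcc 0 x) := by
        apply ContinuousOn.div
        · fun_prop
        · fun_prop
        · intro y hy
          rw [Set.uIcc_of_le hx0.le] at hy
          have := hy.2
          have : 0 < 1 - y := by linarith
          linarith
      rw [intervalIntegral.integral_eq_sub_of_hasDerivAt hderiv
        (hcont.intervalIntegrable)]
      simp
    rw [hinner]
    have hexp : Real.exp (-(-ρ * x - c * Real.log (1 - x)))
        = Real.exp (ρ * x) * (1 - x) ^ c := by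
      rw [Real.rpow_def_of_pos h1x, ← Real.exp_add]
      ring_nf
    rw [hexp]
    rw [Real.rpow_sub h1x, Real.rpow_one]
    field_simp
  rw [key]
  -- Step 2: integration by parts
  have hi1 : IntervalIntegrable (fun x : ℝ => (1 - x) ^ (c - 1) * Real.exp (ρ * x))
      volume 0 1 := by
    have h0 : IntervalIntegrable (fun x : ℝ => x ^ (c - 1)) volume 0 1 :=
      intervalIntegral.intervalIntegrable_rpow' (by linarith)
    have h1 : IntervalIntegrable (fun x : ℝ => (1 - x) ^ (c - 1)) volume 0 1 := by
      have := h0.comp_sub_left 1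
      simpa using this.symm
    exact h1.mul_continuousOn (by fun_prop)
  have hcont2 : Continuous (fun x : ℝ => (1 - x) ^ c * Real.exp (ρ * x)) := by
    apply Continuous.mul _ (by fun_prop)
    refine continuous_iff_continuousAt.2 fun x => ?_
    exact (Real.continuousAt_rpow_const _ _ (Or.inr hc.le)).comp (by fun_prop)
  have hi2 : IntervalIntegrable (fun x : ℝ => (1 - x) ^ c * Real.exp (ρ * x))
      volume 0 1 := hcont2.intervalIntegrable 0 1
  set G : ℝ → ℝ := fun x => -(1 / c) * ((1 - x) ^ c * Real.exp (ρ * x)) with hGdef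
  have hGcont : Continuous G := by
    apply Continuous.mul continuous_const hcont2
  have hGderiv : ∀ x ∈ Set.Ioo (0:ℝ) 1, HasDerivAt G
      ((1 - x) ^ (c - 1) * Real.exp (ρ * x)
        - ρ / c * ((1 - x) ^ c * Real.exp (ρ * x))) x := by
    intro x hx
    have h1x : 0 < 1 - x := by linarith [hx.2]
    have hA : HasDerivAt (fun x : ℝ => (1 - x) ^ c) (c * (1 - x) ^ (c - 1) * (-1)) x :=
      (Real.hasDerivAt_rpow_const (Or.inl h1x.ne')).comp x ((hasDerivAt_id x).const_sub 1)
    have hB : HasDerivAt (fun x : ℝ => Real.exp (ρ * x)) (Real.exp (ρ * x) * (ρ * 1)) x :=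
      (Real.hasDerivAt_exp _).comp x ((hasDerivAt_id x).const_mul ρ)
    have := (hA.mul hB).const_mul (-(1 / c))
    refine this.congr_deriv ?_
    field_simp [hc.ne']
    ring
  have htend0 : Filter.Tendsto G (nhdsWithin 0 (Set.Ioi 0)) (nhds (-(1 / c))) := by
    have : G 0 = -(1 / c) := by simp [hGdef]
    rw [← this]
    exact (hGcont.continuousAt).continuousWithinAt.tendsto
  have htend1 : Filter.Tendsto G (nhdsWithin 1 (Set.Iio 1)) (nhds 0) := by
    have : G 1 = 0 := by simp [hGdef, Real.zero_rpow hc.ne']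
    rw [← this]
    exact (hGcont.continuousAt).continuousWithinAt.tendsto
  have hIBP := intervalIntegral.integral_eq_sub_of_hasDerivAt_of_tendsto
    (by norm_num : (0:ℝ) < 1) hGderiv
    (hi1.sub (hi2.const_mul (ρ / c))) htend0 htend1
  rw [intervalIntegral.integral_sub hi1 (hi2.const_mul (ρ / c)),
    intervalIntegral.integral_const_mul] at hIBP
  have hceq : lam * a * β + δ = c := rfl
  rw [hceq] at *
  have : (∫ x in (0:ℝ)..1, (1 - x) ^ (c - 1) * Real.exp (ρ * x))
      = 1 / c + ρ / c * ∫ x in (0:ℝ)..1, (1 - x) ^ c * Real.exp (ρ * x) := by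
    linarith [hIBP]
  rw [this]
end

section
/- Let b(x) = λx + δ with λ > 0 and δ ≥ 0. Then the map β ↦ β·C(β) is strictly increasing on (0, ∞). -/
open MeasureTheory Real Filter Set

lemma inner_int (c δ x : ℝ) (hx0 : 0 ≤ x) (hx1 : x < 1) :
    ∫ y in (0:ℝ)..x, (c * y + δ) / (1 - y)
      = -(c * x) - (c + δ) * Real.log (1 - x) := by
  have key : ∀ y ∈ Set.uIcc (0:ℝ) x,
      HasDerivAt (fun t => -(c * t) - (c + δ) * Real.log (1 - t))
        ((c * y + δ) / (1 - y)) y := by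
    intro y hy
    rw [Set.uIcc_of_le hx0] at hy
    have h1y : (0:ℝ) < 1 - y := by
      have := hy.2
      linarith [hy.2.trans_lt hx1]
    have hl : HasDerivAt (fun t : ℝ => Real.log (1 - t)) ((1 - y)⁻¹ * (-1)) y :=
      (Real.hasDerivAt_log h1y.ne').comp y ((hasDerivAt_id y).const_sub 1)
    have h2 : HasDerivAt (fun t : ℝ => -(c * t)) (-c) y := by
      have h := ((hasDerivAt_id y).const_mul c).neg
      simp only [Pi.neg_def, id, mul_one] at h
      exact h
    have := h2.sub (hl.const_mul (c + δ))
    refine this.congr_deriv ?_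
    have h1y' : (1:ℝ) - y ≠ 0 := h1y.ne'
    field_simp
    ring
  have hint : IntervalIntegrable (fun y => (c * y + δ) / (1 - y)) volume 0 x := by
    apply ContinuousOn.intervalIntegrable
    apply ContinuousOn.div
    · fun_prop
    · fun_prop
    · intro y hy
      rw [Set.uIcc_of_le hx0] at hy
      have : y < 1 := hy.2.trans_lt hx1
      intro h; linarith [sub_eq_zero.mp h]
  rw [intervalIntegral.integral_eq_sub_of_hasDerivAt key hint]
  simp


lemma Cfun_eq (a lam δ β : ℝ) (hc : 0 < lam * a * β) :
    Cfun a (fun x => lam * x + δ) β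
      = ∫ x in (0:ℝ)..1, (1 - x) ^ (lam * a * β + δ - 1) * Real.exp (lam * a * β * x) := by
  set c := lam * a * β with hcdef
  unfold Cfun
  rw [intervalIntegral.integral_of_le zero_le_one, intervalIntegral.integral_of_le zero_le_one,
    MeasureTheory.integral_Ioc_eq_integral_Ioo, MeasureTheory.integral_Ioc_eq_integral_Ioo]
  apply setIntegral_congr_fun measurableSet_Ioo
  intro x hx
  have h1x : (0:ℝ) < 1 - x := by linarith [hx.2]
  simp only [show ∀ y : ℝ, lam * (a * β * y) + δ = c * y + δ from fun y => by rw [hcdef]; ring]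
  rw [inner_int c δ x hx.1.le hx.2]
  have : -(-(c * x) - (c + δ) * Real.log (1 - x)) = c * x + Real.log (1 - x) * (c + δ) := by ring
  rw [this, Real.exp_add, ← Real.rpow_def_of_pos h1x]
  rw [Real.rpow_sub h1x, Real.rpow_one]
  field_simp


lemma subst_eq (c δ : ℝ) (hc : 0 < c) (hδ : 0 ≤ δ) :
    ∫ s in (0:ℝ)..1, s ^ (δ / c) * Real.exp (c * (1 - s ^ (1 / c)))
      = c * ∫ x in (0:ℝ)..1, (1 - x) ^ (c + δ - 1) * Real.exp (c * x) := by
  have hcinv : (0:ℝ) < 1 / c := by positivity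
  set φ : ℝ → ℝ := fun s => 1 - s ^ (1 / c) with hφ
  have hderiv : ∀ s ∈ Ioo (0:ℝ) 1,
      HasDerivWithinAt φ (-(1 / c * s ^ (1 / c - 1))) (Ioo (0:ℝ) 1) s := by
    intro s hs
    exact ((Real.hasDerivAt_rpow_const (Or.inl hs.1.ne')).const_sub 1).hasDerivWithinAt
  have hmono : StrictAntiOn φ (Ioo (0:ℝ) 1) := by
    intro s hs t ht hst
    have := Real.rpow_lt_rpow hs.1.le hst hcinv
    simp only [hφ]; linarith
  have hinj : InjOn φ (Ioo (0:ℝ) 1) := hmono.injOn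
  have himg : φ '' Ioo (0:ℝ) 1 = Ioo (0:ℝ) 1 := by
    ext x
    constructor
    · rintro ⟨s, hs, rfl⟩
      have h1 : (0:ℝ) < s ^ (1 / c) := Real.rpow_pos_of_pos hs.1 _
      have h2 : s ^ (1 / c) < 1 := Real.rpow_lt_one hs.1.le hs.2 hcinv
      exact ⟨by simp only [hφ]; linarith, by simp only [hφ]; linarith⟩
    · intro hx
      refine ⟨(1 - x) ^ c, ⟨Real.rpow_pos_of_pos (by linarith [hx.2]) _,
        Real.rpow_lt_one (by linarith [hx.2]) (by linarith [hx.1]) hc⟩, ?_⟩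
      simp only [hφ]
      rw [← Real.rpow_mul (by linarith [hx.2] : (0:ℝ) ≤ 1 - x),
        mul_one_div_cancel hc.ne', Real.rpow_one]
      ring
  have key := integral_image_eq_integral_abs_deriv_smul measurableSet_Ioo hderiv hinj
    (fun x => (1 - x) ^ (c + δ - 1) * Real.exp (c * x))
  rw [himg] at key
  rw [intervalIntegral.integral_of_le zero_le_one, intervalIntegral.integral_of_le zero_le_one,
    MeasureTheory.integral_Ioc_eq_integral_Ioo, MeasureTheory.integral_Ioc_eq_integral_Ioo, key]
  rw [← MeasureTheory.integral_const_mul]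
  apply setIntegral_congr_fun measurableSet_Ioo
  intro s hs
  have hspos := hs.1
  have habs : |(-(1 / c * s ^ (1 / c - 1)))| = 1 / c * s ^ (1 / c - 1) := by
    rw [abs_neg, abs_of_nonneg]
    positivity
  have h1φ : 1 - φ s = s ^ (1 / c) := by simp [hφ]
  simp only [smul_eq_mul, habs, hφ]
  have hpow : ((s ^ (1/c)) : ℝ) ^ (c + δ - 1) = s ^ (1/c * (c + δ - 1)) :=
    (Real.rpow_mul hspos.le _ _).symm
  rw [show (1 : ℝ) - (1 - s ^ (1/c)) = s ^ (1/c) by ring, hpow]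
  have hmul : s ^ (1/c - 1) * s ^ (1/c * (c + δ - 1)) = s ^ (δ/c) := by
    rw [← Real.rpow_add hspos]; congr 1; field_simp; ring
  rw [show c * (1/c * s ^ (1/c - 1) * (s ^ (1/c * (c + δ - 1)) * Real.exp (c * (1 - s ^ (1/c)))))
      = (c * (1/c)) * ((s ^ (1/c - 1) * s ^ (1/c * (c + δ - 1))) * Real.exp (c * (1 - s ^ (1/c))))
    from by ring, mul_one_div_cancel hc.ne', one_mul, hmul]


lemma E_strictMono (δ L : ℝ) (hδ : 0 ≤ δ) (hL : L < 0) :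
    StrictMonoOn (fun c => δ / c * L + c * (1 - Real.exp (L / c))) (Set.Ioi 0) := by
  have hD : ∀ c ∈ Set.Ioi (0:ℝ), HasDerivAt (fun c => δ / c * L + c * (1 - Real.exp (L / c)))
      (δ * (-(c ^ 2)⁻¹) * L + ((1 - Real.exp (L / c))
        + c * -(Real.exp (L / c) * (L * (-(c ^ 2)⁻¹))))) c := by
    intro c hc
    have hc0 : c ≠ 0 := ne_of_gt hc
    have h1 : HasDerivAt (fun c : ℝ => δ / c * L) (δ * (-(c ^ 2)⁻¹) * L) c := by
      simpa [div_eq_mul_inv] using (((hasDerivAt_inv hc0).const_mul δ).mul_const L)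
    have h2 : HasDerivAt (fun c : ℝ => L / c) (L * (-(c ^ 2)⁻¹)) c := by
      simpa [div_eq_mul_inv] using ((hasDerivAt_inv hc0).const_mul L)
    have h3 : HasDerivAt (fun c : ℝ => Real.exp (L / c))
        (Real.exp (L / c) * (L * (-(c ^ 2)⁻¹))) c := (Real.hasDerivAt_exp _).comp c h2
    have h4 := h3.const_sub 1
    have h5 := (hasDerivAt_id c).mul h4
    simp only [one_mul, id_eq] at h5
    exact h1.add h5
  apply strictMonoOn_of_deriv_pos (convex_Ioi 0)
  · exact fun c hc => ((hD c hc).continuousAt).continuousWithinAt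
  · intro c hc
    rw [interior_Ioi] at hc
    rw [(hD c hc).deriv]
    have hc0 : (0:ℝ) < c := hc
    set u := L / c with hu
    have hu0 : u < 0 := div_neg_of_neg_of_pos hL hc0
    have hkey : (1 - u) * Real.exp u < 1 := by
      have := Real.add_one_lt_exp (x := -u) (by linarith)
      have hepos : (0:ℝ) < Real.exp u := Real.exp_pos u
      have h2 : (1 - u) * Real.exp u < Real.exp (-u) * Real.exp u := by
        apply mul_lt_mul_of_pos_right _ hepos
        linarith
      rwa [← Real.exp_add, neg_add_cancel, Real.exp_zero] at h2
    have hterm1 : 0 ≤ δ * (-(c ^ 2)⁻¹) * L := by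
      have h2 : (0:ℝ) < (c ^ 2)⁻¹ := by positivity
      nlinarith [mul_nonneg (mul_nonneg hδ h2.le) (neg_nonneg.2 hL.le)]
    have hterm2 : 0 < (1 - Real.exp (L / c)) + c * -(Real.exp (L / c) * (L * (-(c ^ 2)⁻¹))) := by
      have hrw : c * -(Real.exp (L / c) * (L * (-(c ^ 2)⁻¹))) = u * Real.exp u := by
        rw [hu]; field_simp
      rw [hrw, ← hu]
      nlinarith
    linarith


lemma G_lt (δ : ℝ) (hδ : 0 ≤ δ) {c₁ c₂ s : ℝ} (h1 : 0 < c₁) (h : c₁ < c₂)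
    (hs : s ∈ Set.Ioo (0:ℝ) 1) :
    s ^ (δ / c₁) * Real.exp (c₁ * (1 - s ^ (1 / c₁)))
      < s ^ (δ / c₂) * Real.exp (c₂ * (1 - s ^ (1 / c₂))) := by
  have hL : Real.log s < 0 := Real.log_neg hs.1 hs.2
  have key := E_strictMono δ (Real.log s) hδ hL h1 (h1.trans h) h
  have hrw : ∀ c : ℝ, c ≠ 0 → s ^ (δ / c) * Real.exp (c * (1 - s ^ (1 / c)))
      = Real.exp (δ / c * Real.log s + c * (1 - Real.exp (Real.log s / c))) := by
    intro c hc0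
    rw [Real.exp_add]
    congr 2
    · rw [Real.rpow_def_of_pos hs.1, mul_comm]
    · rw [Real.rpow_def_of_pos hs.1]
      congr 2
      rw [mul_one_div]
  rw [hrw c₁ h1.ne', hrw c₂ (h1.trans h).ne']
  exact Real.exp_lt_exp.2 key


lemma G_cont (c δ : ℝ) (hc : 0 < c) (hδ : 0 ≤ δ) :
    Continuous (fun s : ℝ => s ^ (δ / c) * Real.exp (c * (1 - s ^ (1 / c)))) := by
  have h1 : Continuous (fun s : ℝ => s ^ (δ / c)) :=
    Real.continuous_rpow_const (by positivity)
  have h2 : Continuous (fun s : ℝ => s ^ (1 / c)) :=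
    Real.continuous_rpow_const (by positivity)
  exact h1.mul (Real.continuous_exp.comp (continuous_const.mul (continuous_const.sub h2)))


lemma int_G_lt (δ : ℝ) (hδ : 0 ≤ δ) {c₁ c₂ : ℝ} (h1 : 0 < c₁) (h : c₁ < c₂) :
    (∫ s in (0:ℝ)..1, s ^ (δ / c₁) * Real.exp (c₁ * (1 - s ^ (1 / c₁))))
      < ∫ s in (0:ℝ)..1, s ^ (δ / c₂) * Real.exp (c₂ * (1 - s ^ (1 / c₂))) := by
  apply intervalIntegral.integral_lt_integral_of_continuousOn_of_le_of_exists_lt zero_lt_one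
    (G_cont c₁ δ h1 hδ).continuousOn (G_cont c₂ δ (h1.trans h) hδ).continuousOn
  · intro x hx
    rcases eq_or_lt_of_le hx.2 with rfl | hx1
    · simp
    · exact (G_lt δ hδ h1 h ⟨hx.1, hx1⟩).le
  · exact ⟨1/2, ⟨by norm_num, by norm_num⟩, G_lt δ hδ h1 h (by norm_num)⟩

/-- for the affine firing function `b(x) = λ x + δ` with `λ > 0`
and `δ ≥ 0`, the map `β ↦ β C(β)` is strictly increasing on `(0, ∞)`. -/
theorem betaC_strictMonoOn_affine
    (a lam δ : ℝ) (ha : 0 < a) (hlam : 0 < lam) (hδ : 0 ≤ δ) :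
    StrictMonoOn (fun β => β * Cfun a (fun x => lam * x + δ) β) (Set.Ioi 0) := by
  have hla : 0 < lam * a := mul_pos hlam ha
  have key : ∀ β : ℝ, 0 < β → β * Cfun a (fun x => lam * x + δ) β
      = (lam * a)⁻¹ * ∫ s in (0:ℝ)..1,
          s ^ (δ / (lam * a * β)) * Real.exp (lam * a * β * (1 - s ^ (1 / (lam * a * β)))) := by
    intro β hβ
    rw [Cfun_eq a lam δ β (by positivity), subst_eq (lam * a * β) δ (by positivity) hδ]
    rw [← mul_assoc]
    congr 1
    field_simp
  intro β₁ hβ₁ β₂ hβ₂ hβ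
  simp only [Set.mem_Ioi] at hβ₁ hβ₂
  simp only
  rw [key β₁ hβ₁, key β₂ hβ₂]
  have hcc : lam * a * β₁ < lam * a * β₂ := by
    exact mul_lt_mul_of_pos_left hβ hla
  exact mul_lt_mul_of_pos_left (int_G_lt δ hδ (by positivity) hcc) (inv_pos.2 hla)
end
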